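/- arXiv:1702.05342 — 2 statements merged into one kernel-verified Lean document; each statement's English description precedes it below -/
import Mathlib

section
/- For every finite semigroup (M,·), every linear order α, and every additive labelling σ from α to M, there exists a split g : α → {1,…,n} of height n at most 2|M| that is Ramseian for σ. -/
set_option linter.unusedSectionVars false

open Classical


/-- `x` and `y` are neighbours for the split `g`: `g x = g y` and `g z ≤ g x`
for every `z` lying between `x` and `y` (inclusive). -/
def Neighbour {α : Type} [LinearOrder α] (g : α → ℕ) (x y : α) : Prop :=
  g x = g y ∧ ∀ z : α, min x y ≤ z → z ≤ max x y → g z ≤ g x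

/-- The split `g` is Ramseian for the additive labelling `σ`: on every
equivalence class of the neighbourhood relation, `σ` is constant with an
idempotent value. -/
def IsRamseian {α M : Type} [LinearOrder α] (mul : M → M → M) (g : α → ℕ)
    (σ : α → α → M) : Prop :=
  ∀ x₀ : α, ∃ e : M, mul e e = e ∧
    ∀ x y : α, Neighbour g x₀ x → Neighbour g x₀ y → x < y → σ x y = e

namespace SplitSG

variable {M : Type} (mul : M → M → M)

/-- multiplication on `Option M` with `none` as unit -/
def om : Option M → Option M → Option M
  | none, b => b
  | some a, none => some a
  | some a, some b => some (mul a b)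

/-- a ≤_R b -/
def leR (a b : M) : Prop := ∃ u : Option M, om mul (some b) u = some a
/-- a ≤_L b -/
def leL (a b : M) : Prop := ∃ u : Option M, om mul u (some b) = some a
/-- a ≤_J b -/
def leJ (a b : M) : Prop := ∃ u v : Option M, om mul u (om mul (some b) v) = some a

def eqR (a b : M) : Prop := leR mul a b ∧ leR mul b a
def eqL (a b : M) : Prop := leL mul a b ∧ leL mul b a
def eqJ (a b : M) : Prop := leJ mul a b ∧ leJ mul b a

/-- powers: pw a n = a^(n+1) -/
def pw (a : M) : ℕ → M
  | 0 => a
  | n+1 => mul (pw a n) a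

lemma om_some (a b : M) : om mul (some a) (some b) = some (mul a b) := rfl

lemma leR_refl (a : M) : leR mul a a := ⟨none, rfl⟩
lemma leL_refl (a : M) : leL mul a a := ⟨none, rfl⟩
lemma leJ_refl (a : M) : leJ mul a a := ⟨none, none, rfl⟩
lemma mul_leR (a b : M) : leR mul (mul a b) a := ⟨some b, rfl⟩
lemma mul_leL (a b : M) : leL mul (mul a b) b := ⟨some a, rfl⟩
lemma leR_leJ {a b : M} (h : leR mul a b) : leJ mul a b := by
  obtain ⟨u, hu⟩ := h; exact ⟨none, u, hu⟩
lemma leL_leJ {a b : M} (h : leL mul a b) : leJ mul a b := by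
  obtain ⟨u, hu⟩ := h; exact ⟨u, none, by simpa [om] using hu⟩
lemma eqJ_refl (a : M) : eqJ mul a a := ⟨leJ_refl mul a, leJ_refl mul a⟩
lemma eqJ_symm {a b : M} (h : eqJ mul a b) : eqJ mul b a := ⟨h.2, h.1⟩
lemma eqL_symm {a b : M} (h : eqL mul a b) : eqL mul b a := ⟨h.2, h.1⟩
lemma eqR_symm {a b : M} (h : eqR mul a b) : eqR mul b a := ⟨h.2, h.1⟩
lemma eqL_refl (a : M) : eqL mul a a := ⟨leL_refl mul a, leL_refl mul a⟩
lemma eqR_refl (a : M) : eqR mul a a := ⟨leR_refl mul a, leR_refl mul a⟩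
lemma eqL_eqJ {a b : M} (h : eqL mul a b) : eqJ mul a b :=
  ⟨leL_leJ mul h.1, leL_leJ mul h.2⟩
lemma eqR_eqJ {a b : M} (h : eqR mul a b) : eqJ mul a b :=
  ⟨leR_leJ mul h.1, leR_leJ mul h.2⟩

variable (hassoc : ∀ a b c : M, mul (mul a b) c = mul a (mul b c))

include hassoc

lemma om_assoc (a b c : Option M) : om mul (om mul a b) c = om mul a (om mul b c) := by
  cases a <;> cases b <;> cases c <;> simp [om, hassoc]

lemma leR_trans {a b c : M} (h1 : leR mul a b) (h2 : leR mul b c) : leR mul a c := by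
  obtain ⟨u, hu⟩ := h1; obtain ⟨v, hv⟩ := h2
  exact ⟨om mul v u, by rw [← om_assoc mul hassoc, hv, hu]⟩

lemma leL_trans {a b c : M} (h1 : leL mul a b) (h2 : leL mul b c) : leL mul a c := by
  obtain ⟨u, hu⟩ := h1; obtain ⟨v, hv⟩ := h2
  exact ⟨om mul u v, by rw [om_assoc mul hassoc, hv, hu]⟩

lemma leJ_trans {a b c : M} (h1 : leJ mul a b) (h2 : leJ mul b c) : leJ mul a c := by
  obtain ⟨u, v, hu⟩ := h1; obtain ⟨u', v', hv⟩ := h2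
  refine ⟨om mul u u', om mul v' v, ?_⟩
  rw [← hu, ← hv]
  rw [om_assoc mul hassoc u u', om_assoc mul hassoc, om_assoc mul hassoc]

lemma eqJ_trans {a b c : M} (h1 : eqJ mul a b) (h2 : eqJ mul b c) : eqJ mul a c :=
  ⟨leJ_trans mul hassoc h1.1 h2.1, leJ_trans mul hassoc h2.2 h1.2⟩
lemma eqL_trans {a b c : M} (h1 : eqL mul a b) (h2 : eqL mul b c) : eqL mul a c :=
  ⟨leL_trans mul hassoc h1.1 h2.1, leL_trans mul hassoc h2.2 h1.2⟩
lemma eqR_trans {a b c : M} (h1 : eqR mul a b) (h2 : eqR mul b c) : eqR mul a c :=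
  ⟨leR_trans mul hassoc h1.1 h2.1, leR_trans mul hassoc h2.2 h1.2⟩

lemma pw_succ_left (a : M) (n : ℕ) : mul a (pw mul a n) = pw mul a (n+1) := by
  induction n with
  | zero => rfl
  | succ n ih =>
      show mul a (mul (pw mul a n) a) = _
      rw [← hassoc, ih]
      rfl

lemma pw_add (a : M) (m n : ℕ) : pw mul a (m + n + 1) = mul (pw mul a m) (pw mul a n) := by
  induction n with
  | zero => rfl
  | succ n ih =>
      have h : m + (n+1) + 1 = (m + n + 1) + 1 := by omega
      rw [h]
      show mul (pw mul a (m + n + 1)) a = _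
      rw [ih, hassoc]
      rfl

omit hassoc in
lemma pw_period_of [Finite M] (a : M) {i j : ℕ} (hij : i < j) (heq : pw mul a i = pw mul a j) :
    ∀ n t : ℕ, i ≤ n → pw mul a n = pw mul a (n + t * (j - i)) := by
  have key : ∀ n, i ≤ n → pw mul a n = pw mul a (n + (j - i)) := by
    intro n hn
    induction n with
    | zero =>
        have h0 : i = 0 := by omega
        subst h0
        simpa using heq
    | succ n ih =>
        rcases Nat.lt_or_ge n i with h | h
        · have h1 : i = n + 1 := by omega
          subst h1
          have h2 : n + 1 + (j - (n+1)) = j := by omega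
          rw [h2]; exact heq
        · have h3 := ih h
          have h2 : n + 1 + (j - i) = (n + (j-i)) + 1 := by omega
          rw [h2]
          show mul (pw mul a n) a = mul (pw mul a (n + (j-i))) a
          rw [h3]
  intro n t hn
  induction t with
  | zero => simp
  | succ t ih =>
      rw [ih]
      have h3 : n + (t+1) * (j - i) = (n + t * (j-i)) + (j - i) := by ring
      rw [h3]
      exact key _ (by omega)

/-- every element of a finite semigroup has an idempotent power (as element a^(K+1) = pw a K) -/
lemma exists_idem_pow [Finite M] (a : M) : ∃ K : ℕ, mul (pw mul a K) (pw mul a K) = pw mul a K := by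
  obtain ⟨i, j, hne, heq⟩ := Finite.exists_ne_map_eq_of_infinite (pw mul a)
  have main : ∀ i j : ℕ, i < j → pw mul a i = pw mul a j →
      ∃ K, mul (pw mul a K) (pw mul a K) = pw mul a K := by
    intro i j hij heq
    have hper := pw_period_of mul a hij heq
    set d := j - i with hd
    have hdpos : 0 < d := by omega
    have hmul : i + 1 ≤ (i+1) * d := Nat.le_mul_of_pos_right _ hdpos
    refine ⟨(i+1) * d - 1, ?_⟩
    set K := (i+1) * d - 1 with hK
    have h1 : mul (pw mul a K) (pw mul a K) = pw mul a (K + K + 1) := (pw_add mul hassoc a K K).symm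
    rw [h1]
    have h2 : K + K + 1 = K + (i+1) * d := by omega
    have h3 := hper K (i+1) (by omega)
    rw [h2, ← h3]

  rcases lt_or_gt_of_ne hne with h | h
  · exact main i j h heq
  · exact main j i h heq.symm

/-- nonempty finite semigroup has an idempotent -/
lemma exists_idem [Finite M] (a : M) : ∃ e : M, mul e e = e := by
  obtain ⟨K, hK⟩ := exists_idem_pow mul hassoc a
  exact ⟨pw mul a K, hK⟩



/-- key stability lemma: if a ≤_J ab then a ≤_R ab (finite semigroups) -/
lemma stabR [Finite M] {a b : M} (h : leJ mul a (mul a b)) : leR mul a (mul a b) := by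
  obtain ⟨x, y, hxy⟩ := h
  -- c = b·y, always some
  obtain ⟨c', hc⟩ : ∃ c', om mul (some b) y = some c' := by
    cases y with
    | none => exact ⟨b, rfl⟩
    | some y' => exact ⟨mul b y', rfl⟩
  have hacb : om mul (some a) (some c') = om mul (some (mul a b)) y := by
    rw [← hc, ← om_some mul a b, om_assoc mul hassoc]
  have hxy' : om mul x (om mul (some a) (some c')) = some a := by
    rw [hacb]; exact hxy
  have claim : ∀ n, ∃ u, om mul u (om mul (some a) (some (pw mul c' n))) = some a := by
    intro n
    induction n with
    | zero => exact ⟨x, hxy'⟩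
    | succ n ih =>
        obtain ⟨u, hu⟩ := ih
        refine ⟨om mul u x, ?_⟩
        have h1 : some (pw mul c' (n+1)) = om mul (some c') (some (pw mul c' n)) := by
          rw [om_some, pw_succ_left mul hassoc]
        rw [h1]
        calc om mul (om mul u x) (om mul (some a) (om mul (some c') (some (pw mul c' n))))
            = om mul u (om mul x (om mul (om mul (some a) (some c')) (some (pw mul c' n)))) := by
              rw [om_assoc mul hassoc, om_assoc mul hassoc (some a)]
          _ = om mul u (om mul (om mul x (om mul (some a) (some c'))) (some (pw mul c' n))) := by
              rw [om_assoc mul hassoc x]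
          _ = om mul u (om mul (some a) (some (pw mul c' n))) := by rw [hxy']
          _ = some a := hu
  obtain ⟨K, hK⟩ := exists_idem_pow mul hassoc c'
  set e := pw mul c' K with he
  obtain ⟨u, hu⟩ := claim K
  have hae : mul a e = a := by
    have final : some (mul a e) = some a := by
      calc some (mul a e) = om mul (om mul u (om mul (some a) (some e))) (some e) := by
            rw [hu]; rfl
        _ = om mul u (om mul (some a) (om mul (some e) (some e))) := by
            simp only [om_assoc mul hassoc]
        _ = om mul u (om mul (some a) (some e)) := by rw [om_some, hK]
        _ = some a := hu
    exact Option.some_injective _ final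
  -- e = c' · pw c' (K+K)
  have hee : e = mul c' (pw mul c' (K+K)) := by
    have h3 : pw mul c' (K + K + 1) = mul e e := pw_add mul hassoc c' K K
    rw [pw_succ_left mul hassoc, h3, hK]
  refine ⟨om mul y (some (pw mul c' (K+K))), ?_⟩
  calc om mul (some (mul a b)) (om mul y (some (pw mul c' (K+K))))
      = om mul (om mul (some (mul a b)) y) (some (pw mul c' (K+K))) := by
        rw [om_assoc mul hassoc]
    _ = om mul (om mul (some a) (some c')) (some (pw mul c' (K+K))) := by rw [hacb]
    _ = om mul (some a) (om mul (some c') (some (pw mul c' (K+K)))) := by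
        rw [om_assoc mul hassoc]
    _ = om mul (some a) (some e) := by rw [om_some, ← hee]
    _ = some a := by rw [om_some, hae]

/-- dual stability: if b ≤_J ab then b ≤_L ab -/
lemma stabL [Finite M] {a b : M} (h : leJ mul b (mul a b)) : leL mul b (mul a b) := by
  obtain ⟨x, y, hxy⟩ := h
  obtain ⟨c', hc⟩ : ∃ c', om mul x (some a) = some c' := by
    cases x with
    | none => exact ⟨a, rfl⟩
    | some x' => exact ⟨mul x' a, rfl⟩
  have hacb : om mul (some c') (some b) = om mul x (some (mul a b)) := by
    rw [← hc, ← om_some mul a b, ← om_assoc mul hassoc]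
  have hxy' : om mul (om mul (some c') (some b)) y = some b := by
    rw [hacb]
    rw [om_assoc mul hassoc]
    exact hxy
  have claim : ∀ n, ∃ u, om mul (om mul (some (pw mul c' n)) (some b)) u = some b := by
    intro n
    induction n with
    | zero => exact ⟨y, hxy'⟩
    | succ n ih =>
        obtain ⟨u, hu⟩ := ih
        refine ⟨om mul y u, ?_⟩
        have h1 : some (pw mul c' (n+1)) = om mul (some (pw mul c' n)) (some c') := rfl
        rw [h1]
        calc om mul (om mul (om mul (some (pw mul c' n)) (some c')) (some b)) (om mul y u)
            = om mul (some (pw mul c' n)) (om mul (om mul (om mul (some c') (some b)) y) u) := by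
              simp only [om_assoc mul hassoc]
          _ = om mul (some (pw mul c' n)) (om mul (some b) u) := by rw [hxy']
          _ = om mul (om mul (some (pw mul c' n)) (some b)) u := by
              simp only [om_assoc mul hassoc]
          _ = some b := hu
  obtain ⟨K, hK⟩ := exists_idem_pow mul hassoc c'
  set e := pw mul c' K with he
  obtain ⟨u, hu⟩ := claim K
  have hae : mul e b = b := by
    have final : some (mul e b) = some b := by
      calc some (mul e b) = om mul (some e) (om mul (om mul (some e) (some b)) u) := by
            rw [hu]; rfl
        _ = om mul (om mul (om mul (some e) (some e)) (some b)) u := by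
            simp only [om_assoc mul hassoc]
        _ = om mul (om mul (some e) (some b)) u := by rw [om_some, hK]
        _ = some b := hu
    exact Option.some_injective _ final
  have hee : e = mul (pw mul c' (K+K)) c' := by
    have h3 : pw mul c' (K + K + 1) = mul e e := pw_add mul hassoc c' K K
    have h4 : pw mul c' (K+K+1) = mul (pw mul c' (K+K)) c' := rfl
    rw [← h4, h3, hK]
  refine ⟨om mul (some (pw mul c' (K+K))) x, ?_⟩
  calc om mul (om mul (some (pw mul c' (K+K))) x) (some (mul a b))
      = om mul (some (pw mul c' (K+K))) (om mul x (some (mul a b))) := by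
        rw [om_assoc mul hassoc]
    _ = om mul (some (pw mul c' (K+K))) (om mul (some c') (some b)) := by rw [hacb]
    _ = om mul (om mul (some (pw mul c' (K+K))) (some c')) (some b) := by
        rw [om_assoc mul hassoc]
    _ = om mul (some e) (some b) := by rw [om_some, ← hee]
    _ = some b := by rw [om_some, hae]

/-- if s·m = m and s ≤_R m then s is idempotent -/
lemma idem_of_fixR {s m : M} (hfix : mul s m = m) (h : leR mul s m) : mul s s = s := by
  obtain ⟨u, hu⟩ := h
  have final : some (mul s s) = some s := by
    calc some (mul s s) = om mul (some s) (om mul (some m) u) := by rw [hu]; rfl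
      _ = om mul (om mul (some s) (some m)) u := by rw [om_assoc mul hassoc]
      _ = om mul (some m) u := by rw [om_some, hfix]
      _ = some s := hu
  exact Option.some_injective _ final

/-- if m·s = m and s ≤_L m then s is idempotent -/
lemma idem_of_fixL {s m : M} (hfix : mul m s = m) (h : leL mul s m) : mul s s = s := by
  obtain ⟨u, hu⟩ := h
  have final : some (mul s s) = some s := by
    calc some (mul s s) = om mul (om mul u (some m)) (some s) := by rw [hu]; rfl
      _ = om mul u (om mul (some m) (some s)) := by rw [om_assoc mul hassoc]
      _ = om mul u (some m) := by rw [om_some, hfix]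
      _ = some s := hu
  exact Option.some_injective _ final

/-- packaged: s·m = m with s,m J-equivalent gives s idempotent and s R m -/
lemma fixR_pack [Finite M] {s m : M} (hfix : mul s m = m) (hJ : eqJ mul s m) :
    (mul s s = s) ∧ eqR mul s m := by
  have h1 : leJ mul s (mul s m) := by rw [hfix]; exact hJ.1
  have h2 : leR mul s (mul s m) := stabR mul hassoc h1
  rw [hfix] at h2
  have h3 : leR mul m s := ⟨some m, by rw [om_some, hfix]⟩
  exact ⟨idem_of_fixR mul hassoc hfix h2, h2, h3⟩

/-- packaged dual: m·s = m with s,m J-equivalent gives s idempotent and s L m -/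
lemma fixL_pack [Finite M] {s m : M} (hfix : mul m s = m) (hJ : eqJ mul s m) :
    (mul s s = s) ∧ eqL mul s m := by
  have h1 : leJ mul s (mul m s) := by rw [hfix]; exact hJ.1
  have h2 : leL mul s (mul m s) := stabL mul hassoc h1
  rw [hfix] at h2
  have h3 : leL mul m s := ⟨some m, by rw [om_some, hfix]⟩
  exact ⟨idem_of_fixL mul hassoc hfix h2, h2, h3⟩

/-- two idempotents in the same H-class coincide -/
lemma idem_unique {s s' : M} (hs : mul s s = s) (hs' : mul s' s' = s')
    (hR : eqR mul s s') (hL : eqL mul s s') : s = s' := by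
  obtain ⟨u, hu⟩ := hL.2  -- s' = u·s
  obtain ⟨w, hw⟩ := hR.1  -- s = s'·w
  have h1 : mul s' s = s' := by
    have final : some (mul s' s) = some s' := by
      calc some (mul s' s) = om mul (om mul u (some s)) (some s) := by rw [hu]; rfl
        _ = om mul u (om mul (some s) (some s)) := by rw [om_assoc mul hassoc]
        _ = om mul u (some s) := by rw [om_some, hs]
        _ = some s' := hu
    exact Option.some_injective _ final
  have h2 : mul s' s = s := by
    have final : some (mul s' s) = some s := by
      calc some (mul s' s) = om mul (some s') (om mul (some s') w) := by rw [hw]; rfl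
        _ = om mul (om mul (some s') (some s')) w := by rw [om_assoc mul hassoc]
        _ = om mul (some s') w := by rw [om_some, hs']
        _ = some s := hw
    exact Option.some_injective _ final
  rw [← h1, h2]

/-- L-class as a set -/
def Lcl (a : M) : Set M := {v | eqL mul v a}

lemma Lcl_eq_of_eqL {a b : M} (h : eqL mul a b) : Lcl mul a = Lcl mul b := by
  ext v
  exact ⟨fun hv => eqL_trans mul hassoc hv h, fun hv => eqL_trans mul hassoc hv (eqL_symm mul h)⟩

omit hassoc in
lemma mem_Lcl_self (a : M) : a ∈ Lcl mul a := eqL_refl mul a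

/-- R-class as a set -/
def Rcl (a : M) : Set M := {v | eqR mul v a}

lemma Rcl_eq_of_eqR {a b : M} (h : eqR mul a b) : Rcl mul a = Rcl mul b := by
  ext v
  exact ⟨fun hv => eqR_trans mul hassoc hv h, fun hv => eqR_trans mul hassoc hv (eqR_symm mul h)⟩

omit hassoc in
lemma mem_Rcl_self (a : M) : a ∈ Rcl mul a := eqR_refl mul a

/-- Green's translation: given m₀ J t, an injection of the L-class of m₀ into the L-class of t -/
lemma green_exists [Finite M] (m₀ t : M) (h : eqJ mul m₀ t) :
    ∃ f : M → M, (∀ u, eqL mul u m₀ → eqL mul (f u) t) ∧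
      (∀ u u', eqL mul u m₀ → eqL mul u' m₀ → f u = f u' → u = u') := by
  obtain ⟨x, y, hxy⟩ := h.2   -- t = x·m₀·y
  obtain ⟨c'', hc⟩ : ∃ c'', om mul (some m₀) y = some c'' := by
    cases y with
    | none => exact ⟨m₀, rfl⟩
    | some y' => exact ⟨mul m₀ y', rfl⟩
  have hlRc : leR mul c'' m₀ := by
    cases y with
    | none => exact (by cases hc; exact leR_refl mul m₀)
    | some y' => exact (by cases hc; exact mul_leR mul m₀ y')
  have htc : om mul x (some c'') = some t := by rw [← hc, hxy]
  have hlLt : leL mul t c'' := by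
    cases x with
    | none => exact (by cases htc; exact leL_refl mul t)
    | some x' =>
        cases htc; exact mul_leL mul x' c''
  have hJc : eqJ mul m₀ c'' := by
    constructor
    · exact leJ_trans mul hassoc h.1 (leL_leJ mul hlLt)
    · exact leR_leJ mul hlRc
  have hRc : eqR mul m₀ c'' := by
    cases y with
    | none => cases hc; exact eqR_refl mul m₀
    | some y' =>
        cases hc
        have h1 : leJ mul m₀ (mul m₀ y') := hJc.1
        exact ⟨stabR mul hassoc h1, mul_leR mul m₀ y'⟩
  have hLc : eqL mul c'' t := by
    cases x with
    | none => cases htc; exact eqL_refl mul t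
    | some x' =>
        cases htc
        have hct : eqJ mul c'' (mul x' c'') :=
          eqJ_trans mul hassoc (eqJ_symm mul hJc) h
        exact ⟨stabL mul hassoc hct.1, mul_leL mul x' c''⟩
  obtain ⟨w, hw⟩ := hRc.2   -- c'' = m₀·w
  obtain ⟨w', hw'⟩ := hRc.1  -- m₀ = c''·w'
  refine ⟨fun u => (om mul (some u) w).getD u, ?_, ?_⟩
  · intro u hu
    obtain ⟨v, hv⟩ := hu.1    -- u = v·m₀
    obtain ⟨v₂, hv₂⟩ := hu.2  -- m₀ = v₂·u
    obtain ⟨fu, hfu⟩ : ∃ fu, om mul (some u) w = some fu := by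
      cases w with
      | none => exact ⟨u, rfl⟩
      | some w₀ => exact ⟨mul u w₀, rfl⟩
    simp only [hfu, Option.getD_some]
    have hfuL : eqL mul fu c'' := by
      constructor
      · refine ⟨v, ?_⟩
        calc om mul v (some c'') = om mul v (om mul (some m₀) w) := by rw [hw]
          _ = om mul (om mul v (some m₀)) w := by rw [om_assoc mul hassoc]
          _ = om mul (some u) w := by rw [hv]
          _ = some fu := hfu
      · refine ⟨v₂, ?_⟩
        calc om mul v₂ (some fu) = om mul v₂ (om mul (some u) w) := by rw [hfu]
          _ = om mul (om mul v₂ (some u)) w := by rw [om_assoc mul hassoc]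
          _ = om mul (some m₀) w := by rw [hv₂]
          _ = some c'' := hw
    exact eqL_trans mul hassoc hfuL hLc
  · intro u u' hu hu' heq
    obtain ⟨v, hv⟩ := hu.1
    obtain ⟨v', hv'⟩ := hu'.1
    have key : ∀ z : M, ∀ vz : Option M, om mul vz (some m₀) = some z →
        om mul (om mul (some z) w) w' = some z := by
      intro z vz hvz
      rw [om_assoc mul hassoc, ← hvz, om_assoc mul hassoc, ← om_assoc mul hassoc (some m₀) w w',
          hw, hw']
    obtain ⟨fu, hfu⟩ : ∃ fu, om mul (some u) w = some fu := by
      cases w with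
      | none => exact ⟨u, rfl⟩
      | some w₀ => exact ⟨mul u w₀, rfl⟩
    obtain ⟨fu', hfu'⟩ : ∃ fu', om mul (some u') w = some fu' := by
      cases w with
      | none => exact ⟨u', rfl⟩
      | some w₀ => exact ⟨mul u' w₀, rfl⟩
    simp only [hfu, hfu', Option.getD_some] at heq
    have k1 := key u v hv
    have k2 := key u' v' hv'
    rw [hfu] at k1; rw [hfu'] at k2
    rw [heq] at k1
    rw [k2] at k1
    exact (Option.some_injective _ k1).symm

/-- a minimal element wrt the J-preorder in a finite nonempty set -/
lemma exists_minimal_J (s : Finset M) (hs : s.Nonempty) :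
    ∃ a ∈ s, ∀ b ∈ s, leJ mul b a → leJ mul a b := by
  classical
  induction s using Finset.induction with
  | empty => exact absurd hs (by simp)
  | @insert a s ha ih =>
      rcases s.eq_empty_or_nonempty with rfl | hs'
      · refine ⟨a, by simp, ?_⟩
        intro b hb _
        have hba : b = a := by simpa using hb
        subst hba
        exact leJ_refl mul b
      · obtain ⟨b, hb, hbmin⟩ := ih hs'
        by_cases hab : leJ mul a b
        · refine ⟨a, Finset.mem_insert_self a s, ?_⟩
          intro c hc hca
          rcases Finset.mem_insert.mp hc with rfl | hc'
          · exact leJ_refl mul c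
          · have hcb : leJ mul c b := leJ_trans mul hassoc hca hab
            have hbc := hbmin c hc' hcb
            exact leJ_trans mul hassoc hab hbc
        · refine ⟨b, by simp [hb], ?_⟩
          intro c hc hcb
          rcases Finset.mem_insert.mp hc with rfl | hc'
          · exact absurd hcb hab
          · exact hbmin c hc' hcb

end SplitSG


namespace SplitOrd
open SplitSG

set_option maxHeartbeats 1000000

variable {α M : Type} [LinearOrder α] [Finite M]
variable (mul : M → M → M) (σ : α → α → M)

def NeighbourOn (X : Set α) (g : α → ℕ) (x y : α) : Prop :=
  g x = g y ∧ ∀ z ∈ X, min x y ≤ z → z ≤ max x y → g z ≤ g x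

def RamseianOn (X : Set α) (g : α → ℕ) : Prop :=
  ∀ x₀ ∈ X, ∃ e : M, mul e e = e ∧
    ∀ x ∈ X, ∀ y ∈ X, NeighbourOn X g x₀ x → NeighbourOn X g x₀ y → x < y → σ x y = e

/-- J-class of z₀ as a set -/
def Jcl (z₀ : M) : Set M := {m | eqJ mul m z₀}

variable (hassoc : ∀ a b c : M, mul (mul a b) c = mul a (mul b c))

include hassoc

/-- the opposite multiplication -/
def mop : M → M → M := fun a b => mul b a

lemma mop_assoc : ∀ a b c : M, mop mul (mop mul a b) c = mop mul a (mop mul b c) := by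
  intro a b c; simp [mop, hassoc]

omit hassoc in
lemma om_mop (u v : Option M) : om (mop mul) u v = om mul v u := by
  cases u <;> cases v <;> rfl

omit hassoc in
lemma leL_mop (a b : M) : leL (mop mul) a b ↔ leR mul a b := by
  constructor
  · rintro ⟨u, hu⟩; exact ⟨u, by rw [← om_mop mul]; exact hu⟩
  · rintro ⟨u, hu⟩; exact ⟨u, by rw [om_mop mul]; exact hu⟩

omit hassoc in
lemma leR_mop (a b : M) : leR (mop mul) a b ↔ leL mul a b := by
  constructor
  · rintro ⟨u, hu⟩; exact ⟨u, by rw [← om_mop mul]; exact hu⟩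
  · rintro ⟨u, hu⟩; exact ⟨u, by rw [om_mop mul]; exact hu⟩

lemma leJ_mop (a b : M) : leJ (mop mul) a b ↔ leJ mul a b := by
  constructor
  · rintro ⟨u, v, hu⟩
    refine ⟨v, u, ?_⟩
    rw [om_mop mul, om_mop mul] at hu
    rw [← om_assoc mul hassoc]
    exact hu
  · rintro ⟨u, v, hu⟩
    refine ⟨v, u, ?_⟩
    rw [om_mop mul, om_mop mul]
    rw [← om_assoc mul hassoc] at hu
    exact hu

lemma eqJ_mop (a b : M) : eqJ (mop mul) a b ↔ eqJ mul a b := by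
  unfold eqJ
  rw [leJ_mop mul hassoc, leJ_mop mul hassoc]

omit hassoc in
lemma eqL_mop (a b : M) : eqL (mop mul) a b ↔ eqR mul a b := by
  unfold eqL eqR
  rw [leL_mop mul, leL_mop mul]

lemma Jcl_mop (z₀ : M) : Jcl (mop mul) z₀ = Jcl mul z₀ := by
  ext m
  exact eqJ_mop mul hassoc m z₀

omit hassoc in
lemma Lcl_mop (a : M) : Lcl (mop mul) a = Rcl mul a := by
  ext m
  exact eqL_mop mul m a

/-- assigning levels to colors: if all colors of points of `Y` are pairs
`(cfun x, lfun x)` with `cfun x` in a fixed L-class and `lfun x` an L-class of the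
J-class of `z₀`, then there is a level function with at most `|Jcl z₀|` levels
which is injective on colors. -/
lemma color_level (z₀ : M) (Y : Set α) (cfun : α → M) (lfun : α → Set M) (m₀ : M)
    (hm₀ : eqJ mul m₀ z₀)
    (hcl : ∀ x ∈ Y, eqL mul (cfun x) m₀)
    (hlam : ∀ x ∈ Y, ∃ t, eqJ mul t z₀ ∧ lfun x = Lcl mul t) :
    ∃ lev : α → ℕ, (∀ x ∈ Y, 1 ≤ lev x ∧ lev x ≤ (Jcl mul z₀).ncard) ∧
      (∀ x ∈ Y, ∀ y ∈ Y, lev x = lev y → cfun x = cfun y ∧ lfun x = lfun y) := by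
  classical
  -- green map for a given L-class-set
  have gmap : ∀ S : Set M, ∃ f : M → M,
      (∃ t, eqJ mul t z₀ ∧ S = Lcl mul t) →
      ((∀ u, eqL mul u m₀ → eqJ mul (f u) z₀ ∧ Lcl mul (f u) = S) ∧
       (∀ u u', eqL mul u m₀ → eqL mul u' m₀ → f u = f u' → u = u')) := by
    intro S
    by_cases h : ∃ t, eqJ mul t z₀ ∧ S = Lcl mul t
    · obtain ⟨t, ht, hS⟩ := h
      have hm₀t : eqJ mul m₀ t := eqJ_trans mul hassoc hm₀ (eqJ_symm mul ht)
      obtain ⟨f, hf1, hf2⟩ := green_exists mul hassoc m₀ t hm₀t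
      refine ⟨f, fun _ => ⟨?_, hf2⟩⟩
      intro u hu
      have h1 := hf1 u hu
      constructor
      · exact eqJ_trans mul hassoc (eqL_eqJ mul h1) ht
      · rw [hS]; exact Lcl_eq_of_eqL mul hassoc h1
    · exact ⟨id, fun hc => absurd hc h⟩
  choose gf hgf using gmap
  set F : α → M := fun x => gf (lfun x) (cfun x) with hF
  have hFprop : ∀ x ∈ Y, eqJ mul (F x) z₀ ∧ Lcl mul (F x) = lfun x := by
    intro x hx
    have h1 := (hgf (lfun x) (hlam x hx)).1 (cfun x) (hcl x hx)
    exact h1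
  have hFinj : ∀ x ∈ Y, ∀ y ∈ Y, F x = F y → cfun x = cfun y ∧ lfun x = lfun y := by
    intro x hx y hy hxy
    have hl : lfun x = lfun y := by
      rw [← (hFprop x hx).2, ← (hFprop y hy).2, hxy]
    constructor
    · have h2 := (hgf (lfun x) (hlam x hx)).2 (cfun x) (cfun y) (hcl x hx) (hcl y hy)
      apply h2
      have hxy' : gf (lfun x) (cfun x) = gf (lfun y) (cfun y) := hxy
      rw [← hl] at hxy'
      exact hxy'
    · exact hl
  -- levels
  have hfin : (Jcl mul z₀).Finite := Set.toFinite _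
  set JF : Finset M := hfin.toFinset with hJF
  have hcard : JF.card = (Jcl mul z₀).ncard := by
    rw [hJF]
    exact (Set.ncard_eq_toFinset_card _ hfin).symm
  set lev : α → ℕ := fun x => if hx : F x ∈ JF then (JF.equivFin ⟨F x, hx⟩).val + 1 else 1
    with hlev
  refine ⟨lev, ?_, ?_⟩
  · intro x hx
    have hmem : F x ∈ JF := by
      rw [hJF, Set.Finite.mem_toFinset]
      exact (hFprop x hx).1
    constructor
    · simp [hlev, hmem]
    · simp only [hlev, dif_pos hmem]
      have := (JF.equivFin ⟨F x, hmem⟩).isLt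
      omega
  · intro x hx y hy hxy
    have hmx : F x ∈ JF := by
      rw [hJF, Set.Finite.mem_toFinset]; exact (hFprop x hx).1
    have hmy : F y ∈ JF := by
      rw [hJF, Set.Finite.mem_toFinset]; exact (hFprop y hy).1
    simp only [hlev, dif_pos hmx, dif_pos hmy] at hxy
    have : JF.equivFin ⟨F x, hmx⟩ = JF.equivFin ⟨F y, hmy⟩ := by
      apply Fin.ext
      omega
    have h2 := JF.equivFin.injective this
    have h3 : F x = F y := congrArg Subtype.val h2
    exact hFinj x hx y hy h3


section Smooth

variable (hadd : ∀ x y z : α, x < y → y < z → mul (σ x y) (σ y z) = σ x z)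

include hadd

/-- the smooth case: all values in a single J-class -/
lemma smooth (X : Set α) (z₀ : M)
    (hall : ∀ x ∈ X, ∀ y ∈ X, x < y → eqJ mul (σ x y) z₀) :
    ∃ g : α → ℕ, (∀ x ∈ X, 1 ≤ g x ∧ g x ≤ max 2 (2 * (Jcl mul z₀).ncard - 1)) ∧
      RamseianOn mul σ X g := by
  classical
  by_cases hX : X.Nonempty
  swap
  · refine ⟨fun _ => 1, ?_, ?_⟩
    · intro x hx; exact absurd ⟨x, hx⟩ hX
    · intro x₀ hx₀; exact absurd ⟨x₀, hx₀⟩ hX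
  obtain ⟨x₀X, hx₀X⟩ := hX
  obtain ⟨e₀, he₀⟩ := exists_idem mul hassoc (σ x₀X x₀X)
  by_cases hpair : ∃ x ∈ X, ∃ y ∈ X, x < y
  swap
  · refine ⟨fun _ => 1, fun x hx => ⟨le_refl 1, le_max_of_le_left (by norm_num)⟩, ?_⟩
    intro x₀ hx₀
    exact ⟨e₀, he₀, fun x hx y hy _ _ hxy => absurd ⟨x, hx, y, hy, hxy⟩ hpair⟩
  obtain ⟨a, ha, b, hb, hab⟩ := hpair
  set c := (Jcl mul z₀).ncard with hc
  have hz₀mem : z₀ ∈ Jcl mul z₀ := eqJ_refl mul z₀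
  have hc1 : 1 ≤ c := by
    rw [hc]
    have := (Set.ncard_pos (Set.toFinite _)).mpr ⟨z₀, hz₀mem⟩
    omega
  by_cases hcone : c = 1
  · -- the J-class is a singleton {z₀}, so all values are z₀
    have hsingle : ∀ m, eqJ mul m z₀ → m = z₀ := by
      obtain ⟨m', hm'⟩ := Set.ncard_eq_one.mp (hc ▸ hcone)
      intro m hm
      have h1 : m ∈ Jcl mul z₀ := hm
      have h2 : z₀ ∈ Jcl mul z₀ := hz₀mem
      rw [hm'] at h1 h2
      simp at h1 h2
      rw [h1, h2]
    have hval : ∀ x ∈ X, ∀ y ∈ X, x < y → σ x y = z₀ := by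
      intro x hx y hy hxy; exact hsingle _ (hall x hx y hy hxy)
    by_cases htrip : ∃ u ∈ X, ∃ v ∈ X, ∃ w ∈ X, u < v ∧ v < w
    · obtain ⟨u, hu, v, hv, w, hw, h1, h2⟩ := htrip
      have hidem : mul z₀ z₀ = z₀ := by
        have h3 := hadd u v w h1 h2
        rw [hval u hu v hv h1, hval v hv w hw h2] at h3
        rw [h3]
        exact hval u hu w hw (lt_trans h1 h2)
      refine ⟨fun _ => 1, fun x hx => ⟨le_refl 1, le_max_of_le_left (by norm_num)⟩, ?_⟩
      intro y₀ hy₀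
      exact ⟨z₀, hidem, fun x hx y hy _ _ hxy => hval x hx y hy hxy⟩
    · -- X ⊆ {a, b}
      have hsub : ∀ x ∈ X, x = a ∨ x = b := by
        intro x hx
        by_contra hcon
        push_neg at hcon
        rcases lt_trichotomy x a with h | h | h
        · exact htrip ⟨x, hx, a, ha, b, hb, h, hab⟩
        · exact hcon.1 h
        · rcases lt_trichotomy x b with h' | h' | h'
          · exact htrip ⟨a, ha, x, hx, b, hb, h, h'⟩
          · exact hcon.2 h'
          · exact htrip ⟨a, ha, b, hb, x, hx, hab, h'⟩
      refine ⟨fun x => if x = a then 1 else 2, ?_, ?_⟩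
      · intro x hx
        by_cases h : x = a <;> simp [h]
      · intro y₀ hy₀
        refine ⟨e₀, he₀, ?_⟩
        intro x hx y hy hnx hny hxy
        exfalso
        have hgxy : (if x = a then 1 else 2) = (if y = a then 1 else 2) :=
          (hnx.1).symm.trans hny.1
        have hba : b ≠ a := ne_of_gt hab
        rcases hsub x hx with hxa | hxb
        · rcases hsub y hy with hya | hyb
          · rw [hxa, hya] at hxy; exact lt_irrefl _ hxy
          · rw [hxa, hyb, if_pos rfl, if_neg hba] at hgxy
            omega
        · rcases hsub y hy with hya | hyb
          · rw [hxb, hya, if_neg hba, if_pos rfl] at hgxy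
            omega
          · rw [hxb, hyb] at hxy; exact lt_irrefl _ hxy
  -- main case : c ≥ 2
  have hc2 : 2 ≤ c := by omega
  set p := a with hp
  -- left and right germs
  set germL : α → M := fun x => if h : ∃ w, w ∈ X ∧ w < x then σ h.choose x else z₀
    with hgermL
  set germR : α → M := fun x => if h : ∃ w, w ∈ X ∧ x < w then σ x h.choose else z₀
    with hgermR
  have hgermLJ : ∀ x ∈ X, eqJ mul (germL x) z₀ := by
    intro x hx
    rw [hgermL]
    by_cases h : ∃ w, w ∈ X ∧ w < x
    · simp only [dif_pos h]
      exact hall _ h.choose_spec.1 x hx h.choose_spec.2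
    · simp only [dif_neg h]
      exact eqJ_refl mul z₀
  have hgermRJ : ∀ x ∈ X, eqJ mul (germR x) z₀ := by
    intro x hx
    rw [hgermR]
    by_cases h : ∃ w, w ∈ X ∧ x < w
    · simp only [dif_pos h]
      exact hall x hx _ h.choose_spec.1 h.choose_spec.2
    · simp only [dif_neg h]
      exact eqJ_refl mul z₀
  -- all left values at x are L-equivalent
  have hLgen : ∀ x ∈ X, ∀ w ∈ X, ∀ w' ∈ X, w < x → w' < x → eqL mul (σ w x) (σ w' x) := by
    have key : ∀ x ∈ X, ∀ w ∈ X, ∀ w' ∈ X, w < w' → w' < x → eqL mul (σ w x) (σ w' x) := by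
      intro x hx w hw w' hw' hww' hw'x
      have hmul : mul (σ w w') (σ w' x) = σ w x := hadd w w' x hww' hw'x
      constructor
      · rw [← hmul]; exact mul_leL mul _ _
      · have hJ : eqJ mul (σ w' x) (mul (σ w w') (σ w' x)) := by
          rw [hmul]
          exact eqJ_trans mul hassoc (hall w' hw' x hx hw'x)
            (eqJ_symm mul (hall w hw x hx (lt_trans hww' hw'x)))
        have := stabL mul hassoc hJ.1
        rw [hmul] at this
        exact this
    intro x hx w hw w' hw' hwx hw'x
    rcases lt_trichotomy w w' with h | h | h
    · exact key x hx w hw w' hw' h hw'x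
    · rw [h]; exact eqL_refl mul _
    · exact eqL_symm mul (key x hx w' hw' w hw h hwx)
  have hRgen : ∀ x ∈ X, ∀ w ∈ X, ∀ w' ∈ X, x < w → x < w' → eqR mul (σ x w) (σ x w') := by
    have key : ∀ x ∈ X, ∀ w ∈ X, ∀ w' ∈ X, w < w' → x < w → eqR mul (σ x w') (σ x w) := by
      intro x hx w hw w' hw' hww' hxw
      have hmul : mul (σ x w) (σ w w') = σ x w' := hadd x w w' hxw hww'
      constructor
      · rw [← hmul]; exact mul_leR mul _ _
      · have hJ : eqJ mul (σ x w) (mul (σ x w) (σ w w')) := by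
          rw [hmul]
          exact eqJ_trans mul hassoc (hall x hx w hw hxw)
            (eqJ_symm mul (hall x hx w' hw' (lt_trans hxw hww')))
        have := stabR mul hassoc hJ.1
        rw [hmul] at this
        exact this
    intro x hx w hw w' hw' hxw hxw'
    rcases lt_trichotomy w w' with h | h | h
    · exact eqR_symm mul (key x hx w hw w' hw' h hxw)
    · rw [h]; exact eqR_refl mul _
    · exact key x hx w' hw' w hw h hxw'
  have hgermL_spec : ∀ x ∈ X, ∀ w ∈ X, w < x → eqL mul (σ w x) (germL x) := by
    intro x hx w hw hwx
    have h : ∃ w, w ∈ X ∧ w < x := ⟨w, hw, hwx⟩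
    rw [hgermL]
    simp only [dif_pos h]
    exact hLgen x hx w hw h.choose h.choose_spec.1 hwx h.choose_spec.2
  have hgermR_spec : ∀ x ∈ X, ∀ w ∈ X, x < w → eqR mul (σ x w) (germR x) := by
    intro x hx w hw hxw
    have h : ∃ w, w ∈ X ∧ x < w := ⟨w, hw, hxw⟩
    rw [hgermR]
    simp only [dif_pos h]
    exact hRgen x hx w hw h.choose h.choose_spec.1 hxw h.choose_spec.2
  -- left levels
  obtain ⟨levL, hlevLb, hlevLinj⟩ :=
    color_level mul hassoc z₀ {x ∈ X | x < p} (fun x => σ x p) (fun x => Lcl mul (germL x))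
      (germL p) (hgermLJ p ha)
      (by
        intro x hx
        exact hgermL_spec p ha x hx.1 hx.2)
      (by
        intro x hx
        exact ⟨germL x, hgermLJ x hx.1, rfl⟩)
  -- right levels, via the opposite semigroup
  obtain ⟨levR, hlevRb0, hlevRinj⟩ :=
    color_level (mop mul) (mop_assoc mul hassoc) z₀ {x ∈ X | p < x} (fun x => σ p x)
      (fun x => Lcl (mop mul) (germR x)) (germR p)
      (by rw [eqJ_mop mul hassoc]; exact hgermRJ p ha)
      (by
        intro x hx
        rw [eqL_mop mul]
        exact hgermR_spec p ha x hx.1 hx.2)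
      (by
        intro x hx
        exact ⟨germR x, by rw [eqJ_mop mul hassoc]; exact hgermRJ x hx.1, rfl⟩)
  have hlevRb : ∀ x ∈ {x ∈ X | p < x}, 1 ≤ levR x ∧ levR x ≤ c := by
    intro x hx
    have := hlevRb0 x hx
    rwa [Jcl_mop mul hassoc] at this
  set g : α → ℕ := fun x => if x = p then c + 1 else if x < p then levL x else levR x
    with hg
  have hgp : g p = c + 1 := by rw [hg]; simp
  have hgl : ∀ x, x < p → g x = levL x := by
    intro x hxp
    rw [hg]
    simp only
    rw [if_neg (ne_of_lt hxp), if_pos hxp]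
  have hgr : ∀ x, p < x → g x = levR x := by
    intro x hxp
    rw [hg]
    simp only
    rw [if_neg (ne_of_gt hxp), if_neg (not_lt_of_gt hxp)]
  refine ⟨g, ?_, ?_⟩
  · intro x hx
    have hub : c + 1 ≤ max 2 (2 * c - 1) := le_max_of_le_right (by omega)
    rcases lt_trichotomy x p with h | h | h
    · rw [hgl x h]
      have := hlevLb x ⟨hx, h⟩
      omega
    · rw [h, hgp]
      omega
    · rw [hgr x h]
      have := hlevRb x ⟨hx, h⟩
      omega
  · intro y₀ hy₀
    rcases lt_trichotomy y₀ p with hy₀p | hy₀p | hy₀p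
    · -- y₀ left of pivot
      have hmem : ∀ y ∈ X, NeighbourOn X g y₀ y → y < p ∧ levL y = levL y₀ := by
        intro y hy hn
        have h1 : g y₀ = levL y₀ := hgl y₀ hy₀p
        have hbl := hlevLb y₀ ⟨hy₀, hy₀p⟩
        have h2 : g y₀ = g y := hn.1
        have hyp : y < p := by
          rcases lt_trichotomy y p with h | h | h
          · exact h
          · exfalso; rw [h, hgp] at h2; omega
          · exfalso
            have h3 := hn.2 p ha (le_trans (min_le_left _ _) (le_of_lt hy₀p))
              (le_trans (le_of_lt h) (le_max_right _ _))
            rw [hgp, h1] at h3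
            omega
        refine ⟨hyp, ?_⟩
        rw [h1, hgl y hyp] at h2
        omega
      have hprops : ∀ x ∈ X, ∀ y ∈ X, NeighbourOn X g y₀ x → NeighbourOn X g y₀ y → x < y →
          (mul (σ x y) (σ x y) = σ x y ∧ eqR mul (σ x y) (σ y₀ p) ∧
            Lcl mul (σ x y) = Lcl mul (germL y₀)) := by
        intro x hx y hy hnx hny hxy
        obtain ⟨hxp, hlx⟩ := hmem x hx hnx
        obtain ⟨hyp, hly⟩ := hmem y hy hny
        have hcolx := hlevLinj x ⟨hx, hxp⟩ y₀ ⟨hy₀, hy₀p⟩ (by omega)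
        have hcoly := hlevLinj y ⟨hy, hyp⟩ y₀ ⟨hy₀, hy₀p⟩ (by omega)
        have hfix : mul (σ x y) (σ y p) = σ x p := hadd x y p hxy hyp
        rw [hcoly.1, hcolx.1] at hfix
        have hJ : eqJ mul (σ x y) (σ y₀ p) :=
          eqJ_trans mul hassoc (hall x hx y hy hxy)
            (eqJ_symm mul (hall y₀ hy₀ p ha hy₀p))
        obtain ⟨hid, hR⟩ := fixR_pack mul hassoc hfix hJ
        refine ⟨hid, hR, ?_⟩
        have h5 : Lcl mul (σ x y) = Lcl mul (germL y) :=
          Lcl_eq_of_eqL mul hassoc (hgermL_spec y hy x hx hxy)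
        rw [h5, hcoly.2]
      by_cases hP : ∃ x, x ∈ X ∧ ∃ y, y ∈ X ∧ NeighbourOn X g y₀ x ∧ NeighbourOn X g y₀ y ∧ x < y
      swap
      · refine ⟨e₀, he₀, ?_⟩
        intro x hx y hy hnx hny hxy
        exact absurd ⟨x, hx, y, hy, hnx, hny, hxy⟩ hP
      obtain ⟨x1, hx1, y1, hy1, hn1, hn1', hlt1⟩ := hP
      obtain ⟨hid1, hR1, hL1⟩ := hprops x1 hx1 y1 hy1 hn1 hn1' hlt1
      refine ⟨σ x1 y1, hid1, ?_⟩
      intro x hx y hy hnx hny hxy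
      obtain ⟨hid2, hR2, hL2⟩ := hprops x hx y hy hnx hny hxy
      have hRR : eqR mul (σ x y) (σ x1 y1) := eqR_trans mul hassoc hR2 (eqR_symm mul hR1)
      have hLL : eqL mul (σ x y) (σ x1 y1) := by
        have h6 : σ x y ∈ Lcl mul (σ x1 y1) := by
          rw [hL1, ← hL2]
          exact mem_Lcl_self mul _
        exact h6
      exact idem_unique mul hassoc hid2 hid1 hRR hLL
    · -- y₀ = p : the class of p is {p}
      refine ⟨e₀, he₀, ?_⟩
      intro x hx y hy hnx hny hxy
      exfalso
      have hone : ∀ w ∈ X, NeighbourOn X g y₀ w → w = y₀ := by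
        intro w hw hn
        subst hy₀p
        by_contra hne
        have h2 : g y₀ = g w := hn.1
        rw [hgp] at h2
        rcases lt_trichotomy w p with h | h | h
        · rw [hgl w h] at h2
          have := hlevLb w ⟨hw, h⟩
          omega
        · exact hne h
        · rw [hgr w h] at h2
          have := hlevRb w ⟨hw, h⟩
          omega
      have e1 := hone x hx hnx
      have e2 := hone y hy hny
      rw [e1, e2] at hxy
      exact lt_irrefl _ hxy
    · -- y₀ right of pivot
      have hmem : ∀ y ∈ X, NeighbourOn X g y₀ y → p < y ∧ levR y = levR y₀ := by
        intro y hy hn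
        have h1 : g y₀ = levR y₀ := hgr y₀ hy₀p
        have hbl := hlevRb y₀ ⟨hy₀, hy₀p⟩
        have h2 : g y₀ = g y := hn.1
        have hyp : p < y := by
          rcases lt_trichotomy y p with h | h | h
          · exfalso
            have h3 := hn.2 p ha (le_trans (min_le_right _ _) (le_of_lt h))
              (le_trans (le_of_lt hy₀p) (le_max_left _ _))
            rw [hgp, h1] at h3
            omega
          · exfalso; rw [h, hgp] at h2; omega
          · exact h
        refine ⟨hyp, ?_⟩
        rw [h1, hgr y hyp] at h2
        omega
      have hprops : ∀ x ∈ X, ∀ y ∈ X, NeighbourOn X g y₀ x → NeighbourOn X g y₀ y → x < y →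
          (mul (σ x y) (σ x y) = σ x y ∧ eqL mul (σ x y) (σ p y₀) ∧
            Rcl mul (σ x y) = Rcl mul (germR y₀)) := by
        intro x hx y hy hnx hny hxy
        obtain ⟨hxp, hlx⟩ := hmem x hx hnx
        obtain ⟨hyp, hly⟩ := hmem y hy hny
        have hcolx := hlevRinj x ⟨hx, hxp⟩ y₀ ⟨hy₀, hy₀p⟩ (by omega)
        have hcoly := hlevRinj y ⟨hy, hyp⟩ y₀ ⟨hy₀, hy₀p⟩ (by omega)
        have hfix : mul (σ p x) (σ x y) = σ p y := hadd p x y hxp hxy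
        rw [hcolx.1, hcoly.1] at hfix
        have hJ : eqJ mul (σ x y) (σ p y₀) :=
          eqJ_trans mul hassoc (hall x hx y hy hxy)
            (eqJ_symm mul (hall p ha y₀ hy₀ hy₀p))
        obtain ⟨hid, hL⟩ := fixL_pack mul hassoc hfix hJ
        refine ⟨hid, hL, ?_⟩
        have h5 : Rcl mul (σ x y) = Rcl mul (germR x) :=
          Rcl_eq_of_eqR mul hassoc (hgermR_spec x hx y hy hxy)
        rw [h5]
        have h6 : Lcl (mop mul) (germR x) = Lcl (mop mul) (germR y₀) := hcolx.2
        rw [Lcl_mop mul, Lcl_mop mul] at h6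
        exact h6
      by_cases hP : ∃ x, x ∈ X ∧ ∃ y, y ∈ X ∧ NeighbourOn X g y₀ x ∧ NeighbourOn X g y₀ y ∧ x < y
      swap
      · refine ⟨e₀, he₀, ?_⟩
        intro x hx y hy hnx hny hxy
        exact absurd ⟨x, hx, y, hy, hnx, hny, hxy⟩ hP
      obtain ⟨x1, hx1, y1, hy1, hn1, hn1', hlt1⟩ := hP
      obtain ⟨hid1, hL1, hR1⟩ := hprops x1 hx1 y1 hy1 hn1 hn1' hlt1
      refine ⟨σ x1 y1, hid1, ?_⟩
      intro x hx y hy hnx hny hxy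
      obtain ⟨hid2, hL2, hR2⟩ := hprops x hx y hy hnx hny hxy
      have hLL : eqL mul (σ x y) (σ x1 y1) := eqL_trans mul hassoc hL2 (eqL_symm mul hL1)
      have hRR : eqR mul (σ x y) (σ x1 y1) := by
        have h6 : σ x y ∈ Rcl mul (σ x1 y1) := by
          rw [hR1, ← hR2]
          exact mem_Rcl_self mul _
        exact h6
      exact idem_unique mul hassoc hid2 hid1 hRR hLL

end Smooth


omit hassoc in
/-- in any nonempty suborder with a bounded level function there is a level `m` occurring
cofinally such that beyond suitable points all levels are `≤ m` -/
lemma top_tail (S : Set α) (hS : S.Nonempty) (g : α → ℕ) (h : ℕ) (hb : ∀ x ∈ S, g x ≤ h) :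
    ∃ m : ℕ, ∀ q ∈ S, ∃ d ∈ S, q ≤ d ∧ g d = m ∧ ∀ w ∈ S, d < w → g w ≤ m := by
  classical
  set noncof : ℕ → Prop := fun ℓ => ∃ q ∈ S, ∀ z ∈ S, q ≤ z → g z ≠ ℓ with hnoncof
  set qf : ℕ → α := fun ℓ => if hℓ : noncof ℓ then hℓ.choose else hS.choose with hqf
  have hqfS : ∀ ℓ, qf ℓ ∈ S := by
    intro ℓ
    rw [hqf]
    by_cases hℓ : noncof ℓ
    · simp only [dif_pos hℓ]; exact hℓ.choose_spec.1
    · simp only [dif_neg hℓ]; exact hS.choose_spec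
  have hqfprop : ∀ ℓ, noncof ℓ → ∀ z ∈ S, qf ℓ ≤ z → g z ≠ ℓ := by
    intro ℓ hℓ
    rw [hqf]
    simp only [dif_pos hℓ]
    exact hℓ.choose_spec.2
  -- the set of cofinal levels is nonempty
  have hCO : ∃ ℓ ≤ h, ¬ noncof ℓ := by
    by_contra hcon
    push_neg at hcon
    set F : Finset α := (Finset.range (h+1)).image qf with hF
    have hFne : F.Nonempty := by
      rw [hF]
      apply Finset.Nonempty.image
      exact ⟨0, by simp⟩
    set qm := F.max' hFne with hqm
    have hqmS : qm ∈ S := by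
      have hmem : F.max' hFne ∈ Finset.image qf (Finset.range (h+1)) := F.max'_mem hFne
      obtain ⟨ℓ, _, hℓ⟩ := Finset.mem_image.mp hmem
      show F.max' hFne ∈ S
      rw [← hℓ]
      exact hqfS ℓ
    set ℓ₀ := g qm with hℓ₀
    have hℓ₀h : ℓ₀ ≤ h := hb qm hqmS
    have hnc : noncof ℓ₀ := hcon ℓ₀ hℓ₀h
    have hle : qf ℓ₀ ≤ qm := by
      apply F.le_max'
      rw [hF]
      exact Finset.mem_image.mpr ⟨ℓ₀, by simp [Nat.lt_succ_iff, hℓ₀h], rfl⟩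
    exact hqfprop ℓ₀ hnc qm hqmS hle rfl
  -- m := the largest cofinal level
  set CF : Finset ℕ := (Finset.range (h+1)).filter (fun ℓ => ¬ noncof ℓ) with hCF
  have hCFne : CF.Nonempty := by
    obtain ⟨ℓ, hℓh, hℓ⟩ := hCO
    exact ⟨ℓ, by simp [hCF, Nat.lt_succ_iff, hℓh, hℓ]⟩
  set m := CF.max' hCFne with hm
  have hmcof : ¬ noncof m := by
    have hmem : CF.max' hCFne ∈ Finset.filter (fun ℓ => ¬ noncof ℓ) (Finset.range (h+1)) :=
      CF.max'_mem hCFne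
    exact (Finset.mem_filter.mp hmem).2
  refine ⟨m, ?_⟩
  intro q hq
  -- collect bounds for all non-cofinal levels
  set F : Finset α := insert q ((Finset.range (h+1)).image qf) with hF
  have hFne : F.Nonempty := ⟨q, by simp [hF]⟩
  set qm := F.max' hFne with hqm
  have hqmS : qm ∈ S := by
    have hmem : F.max' hFne ∈ insert q (Finset.image qf (Finset.range (h+1))) := F.max'_mem hFne
    show F.max' hFne ∈ S
    rcases Finset.mem_insert.mp hmem with h1 | h1
    · rw [h1]; exact hq
    · obtain ⟨ℓ, _, hℓ⟩ := Finset.mem_image.mp h1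
      rw [← hℓ]
      exact hqfS ℓ
  -- m is cofinal : find d ≥ qm with g d = m
  have hmcof' : ∀ q' ∈ S, ∃ z ∈ S, q' ≤ z ∧ g z = m := by
    intro q' hq'
    by_contra hcc
    push_neg at hcc
    exact hmcof ⟨q', hq', fun z hz hqz => hcc z hz hqz⟩
  obtain ⟨d, hdS, hqd, hd⟩ := hmcof' qm hqmS
  refine ⟨d, hdS, ?_, hd, ?_⟩
  · exact le_trans (F.le_max' q (by simp [hF])) hqd
  · intro w hw hdw
    by_contra hcon
    push_neg at hcon
    set ℓ := g w with hℓ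
    have hℓh : ℓ ≤ h := hb w hw
    have hnc : noncof ℓ := by
      by_contra hcc
      have hmem : ℓ ∈ CF := by simp [hCF, Nat.lt_succ_iff, hℓh, hcc]
      have := CF.le_max' ℓ hmem
      rw [← hm] at this
      omega
    have hle : qf ℓ ≤ w := by
      have h1 : qf ℓ ≤ qm := by
        apply F.le_max'
        rw [hF]
        exact Finset.mem_insert_of_mem (Finset.mem_image.mpr ⟨ℓ, by simp [Nat.lt_succ_iff, hℓh], rfl⟩)
      exact le_trans h1 (le_trans hqd (le_of_lt hdw))
    exact hqfprop ℓ hnc w hw hle rfl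

omit hassoc in
/-- Zorn: a maximal pairwise-far subset -/
lemma exists_max_clique (X : Set α) (P : α → α → Prop) :
    ∃ W : Set α, W ⊆ X ∧ (∀ x ∈ W, ∀ y ∈ W, x < y → P x y) ∧
      (∀ z ∈ X, z ∉ W → ¬ (∀ x ∈ W, ∀ y ∈ W, x < y → P x y) ∨
        ¬ ((∀ x ∈ W, x < z → P x z) ∧ (∀ y ∈ W, z < y → P z y))) := by
  classical
  set 𝒮 : Set (Set α) := {W | W ⊆ X ∧ ∀ x ∈ W, ∀ y ∈ W, x < y → P x y} with h𝒮
  have hchain : ∀ c ⊆ 𝒮, IsChain (· ⊆ ·) c → c.Nonempty → ∃ ub ∈ 𝒮, ∀ s ∈ c, s ⊆ ub := by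
    intro c hc hchain _
    refine ⟨⋃₀ c, ⟨?_, ?_⟩, fun s hs => Set.subset_sUnion_of_mem hs⟩
    · intro x hx
      obtain ⟨s, hs, hxs⟩ := hx
      exact (hc hs).1 hxs
    · intro x hx y' hy' hxy
      obtain ⟨s, hs, hxs⟩ := hx
      obtain ⟨s', hs', hys⟩ := hy'
      rcases hchain.total hs hs' with h | h
      · exact (hc hs').2 x (h hxs) y' hys hxy
      · exact (hc hs).2 x hxs y' (h hys) hxy
  have hne : (∅ : Set α) ∈ 𝒮 := ⟨Set.empty_subset X, by simp⟩
  obtain ⟨W, _, hWmax⟩ := zorn_subset_nonempty 𝒮 hchain ∅ hne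
  have hW𝒮 : W ∈ 𝒮 := hWmax.prop
  refine ⟨W, hW𝒮.1, hW𝒮.2, ?_⟩
  intro z hz hzW
  right
  intro ⟨h1, h2⟩
  have hins : insert z W ∈ 𝒮 := by
    constructor
    · intro x hx
      rcases Set.mem_insert_iff.mp hx with rfl | hx'
      · exact hz
      · exact hW𝒮.1 hx'
    · intro x hx y hy hxy
      rcases Set.mem_insert_iff.mp hx with rfl | hx'
      · rcases Set.mem_insert_iff.mp hy with rfl | hy'
        · exact absurd hxy (lt_irrefl _)
        · exact h2 y hy' hxy
      · rcases Set.mem_insert_iff.mp hy with rfl | hy'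
        · exact h1 x hx' hxy
        · exact hW𝒮.2 x hx' y hy' hxy
  have hsub := hWmax.2 hins (Set.subset_insert z W)
  exact hzW (hsub (Set.mem_insert z W))


def isVal (X : Set α) (v : M) : Prop := ∃ x, x ∈ X ∧ ∃ y, y ∈ X ∧ x < y ∧ σ x y = v

def Jsat (X : Set α) : Set M := {m | ∃ v, isVal σ X v ∧ eqJ mul m v}

abbrev LHp (W : Set α) (v₀ : M) : α → Prop :=
  fun z => ∃ w ∈ W, w < z ∧ ¬ eqJ mul (σ w z) v₀

abbrev RHp (W : Set α) (v₀ : M) : α → Prop :=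
  fun z => ∃ w ∈ W, z < w ∧ ¬ eqJ mul (σ z w) v₀

abbrev sameGapp (W : Set α) : α → α → Prop :=
  fun z z' => ∀ w ∈ W, ¬ (min z z' < w ∧ w < max z z')

abbrev Qp (X W : Set α) (v₀ : M) : α → Set α :=
  fun z => {z' | z' ∈ X ∧ z' ∉ W ∧ sameGapp W z z' ∧ (LHp mul σ W v₀ z' ↔ LHp mul σ W v₀ z)}

section Main

variable (hadd : ∀ x y z : α, x < y → y < z → mul (σ x y) (σ y z) = σ x z)

include hadd

lemma main_split : ∀ (k : ℕ) (X : Set α), (Jsat mul σ X).ncard ≤ k →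
    ∃ g : α → ℕ, (∀ x ∈ X, 1 ≤ g x ∧ g x ≤ max 1 (2 * (Jsat mul σ X).ncard)) ∧
      RamseianOn mul σ X g := by
  intro k
  induction k using Nat.strong_induction_on with
  | _ k IH =>
  intro X hk
  classical
  by_cases hpair : ∃ x, x ∈ X ∧ ∃ y, y ∈ X ∧ x < y
  swap
  · refine ⟨fun _ => 1, fun x hx => ⟨le_refl 1, le_max_left 1 _⟩, ?_⟩
    intro x₀ hx₀
    obtain ⟨e₀, he₀⟩ := exists_idem mul hassoc (σ x₀ x₀)
    exact ⟨e₀, he₀, fun x hx y hy _ _ hxy => absurd ⟨x, hx, y, hy, hxy⟩ hpair⟩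
  obtain ⟨a0, ha0, b0, hb0, hab0⟩ := hpair
  -- a J-minimal value v₀
  have hvfin : ({v | isVal σ X v}).Finite := Set.toFinite _
  have hvalsne : hvfin.toFinset.Nonempty := by
    refine ⟨σ a0 b0, ?_⟩
    rw [Set.Finite.mem_toFinset]
    exact ⟨a0, ha0, b0, hb0, hab0, rfl⟩
  obtain ⟨v₀, hv₀mem, hv₀min⟩ := exists_minimal_J mul hassoc hvfin.toFinset hvalsne
  have hv₀val : isVal σ X v₀ := by
    rwa [Set.Finite.mem_toFinset] at hv₀mem
  have hmin' : ∀ u, isVal σ X u → leJ mul u v₀ → eqJ mul u v₀ := by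
    intro u hu hle
    refine ⟨hle, hv₀min u ?_ hle⟩
    rwa [Set.Finite.mem_toFinset]
  set j := (Jsat mul σ X).ncard with hj
  set c := (Jcl mul v₀).ncard with hcc
  have hJclsub : Jcl mul v₀ ⊆ Jsat mul σ X := fun m hm => ⟨v₀, hv₀val, hm⟩
  have hsatfin : (Jsat mul σ X).Finite := Set.toFinite _
  have hc1 : 1 ≤ c := by
    have := (Set.ncard_pos (Set.toFinite (Jcl mul v₀))).mpr ⟨v₀, eqJ_refl mul v₀⟩
    omega
  have hjc : c ≤ j := Set.ncard_le_ncard hJclsub hsatfin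
  have hj1 : 1 ≤ j := le_trans hc1 hjc
  have hvalXval : ∀ x ∈ X, ∀ y ∈ X, x < y → isVal σ X (σ x y) :=
    fun x hx y hy hxy => ⟨x, hx, y, hy, hxy, rfl⟩
  by_cases hA : ∀ u, isVal σ X u → eqJ mul u v₀
  · obtain ⟨g, hgb, hgram⟩ := smooth mul σ hassoc hadd X v₀
      (fun x hx y hy hxy => hA _ (hvalXval x hx y hy hxy))
    refine ⟨g, ?_, hgram⟩
    have hjceq : j = c := by
      rw [hj, hcc]
      congr 1
      apply Set.Subset.antisymm
      · intro m hm
        obtain ⟨v, hv, hmv⟩ := hm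
        exact eqJ_trans mul hassoc hmv (hA v hv)
      · exact hJclsub
    intro x hx
    have h1 := hgb x hx
    rw [← hcc] at h1
    refine ⟨h1.1, le_trans h1.2 ?_⟩
    omega
  push_neg at hA
  obtain ⟨u₀, hu₀val, hu₀⟩ := hA
  have hjc1 : c + 1 ≤ j := by
    have hu₀not : u₀ ∉ Jcl mul v₀ := hu₀
    have hins : insert u₀ (Jcl mul v₀) ⊆ Jsat mul σ X := by
      intro m hm
      rcases Set.mem_insert_iff.mp hm with hmu | hm'
      · rw [hmu]; exact ⟨u₀, hu₀val, eqJ_refl mul u₀⟩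
      · exact hJclsub hm'
    have h1 : (insert u₀ (Jcl mul v₀)).ncard = c + 1 :=
      Set.ncard_insert_of_notMem hu₀not (Set.toFinite _)
    have h2 := Set.ncard_le_ncard hins hsatfin
    omega
  -- absorption lemmas for "far" pairs (σ-value J-equivalent to v₀)
  have hminval : ∀ x ∈ X, ∀ y ∈ X, x < y → leJ mul (σ x y) v₀ → eqJ mul (σ x y) v₀ :=
    fun x hx y hy hxy hle => hmin' _ (hvalXval x hx y hy hxy) hle
  have habsL : ∀ x ∈ X, ∀ y ∈ X, ∀ z ∈ X, x < y → y ≤ z →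
      eqJ mul (σ x y) v₀ → eqJ mul (σ x z) v₀ := by
    intro x hx y hy z hz hxy hyz hfar
    rcases eq_or_lt_of_le hyz with rfl | hyz'
    · exact hfar
    · have hmul : mul (σ x y) (σ y z) = σ x z := hadd x y z hxy hyz'
      have hle : leJ mul (σ x z) (σ x y) := by
        rw [← hmul]
        exact leR_leJ mul (mul_leR mul _ _)
      exact hminval x hx z hz (lt_trans hxy hyz') (leJ_trans mul hassoc hle hfar.1)
  have habsR : ∀ x ∈ X, ∀ y ∈ X, ∀ z ∈ X, x ≤ y → y < z →
      eqJ mul (σ y z) v₀ → eqJ mul (σ x z) v₀ := by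
    intro x hx y hy z hz hxy hyz hfar
    rcases eq_or_lt_of_le hxy with rfl | hxy'
    · exact hfar
    · have hmul : mul (σ x y) (σ y z) = σ x z := hadd x y z hxy' hyz
      have hle : leJ mul (σ x z) (σ y z) := by
        rw [← hmul]
        exact leL_leJ mul (mul_leL mul _ _)
      exact hminval x hx z hz (lt_trans hxy' hyz) (leJ_trans mul hassoc hle hfar.1)
  set h := max 1 (2 * (j - c)) with hh
  -- recursion for J*-free subsets
  have hIH : ∀ S : Set α, S ⊆ X → (∀ x ∈ S, ∀ y ∈ S, x < y → ¬ eqJ mul (σ x y) v₀) →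
      ∃ g, (∀ x ∈ S, 1 ≤ g x ∧ g x ≤ h) ∧ RamseianOn mul σ S g := by
    intro S hSX hfree
    have hsub : Jsat mul σ S ⊆ Jsat mul σ X \ Jcl mul v₀ := by
      intro m hm
      obtain ⟨v, hvS, hmv⟩ := hm
      obtain ⟨x, hx, y, hy, hxy, rfl⟩ := hvS
      constructor
      · exact ⟨σ x y, ⟨x, hSX hx, y, hSX hy, hxy, rfl⟩, hmv⟩
      · intro hmem
        exact hfree x hx y hy hxy (eqJ_trans mul hassoc (eqJ_symm mul hmv) hmem)
    have hdiff : (Jsat mul σ X \ Jcl mul v₀).ncard = j - c := by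
      rw [Set.ncard_diff hJclsub (Set.toFinite _)]
    have hcard : (Jsat mul σ S).ncard ≤ j - c := by
      have h1 := Set.ncard_le_ncard hsub hsatfin.diff
      omega
    obtain ⟨g, hgb, hgram⟩ := IH (j - c) (by omega) S hcard
    refine ⟨g, ?_, hgram⟩
    intro x hx
    have h1 := hgb x hx
    have hmax : max 1 (2 * (Jsat mul σ S).ncard) ≤ h := by
      rw [hh]
      exact max_le_max (le_refl 1) (by omega)
    exact ⟨h1.1, le_trans h1.2 hmax⟩
  by_cases hsp : c = 1 ∧ ¬ (mul v₀ v₀ = v₀)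
  · -- ===================== γ-cut construction =====================
    obtain ⟨hcone, hnidem⟩ := hsp
    have hsingle : ∀ m, eqJ mul m v₀ → m = v₀ := by
      have hcone' : (Jcl mul v₀).ncard = 1 := by rw [← hcc]; exact hcone
      obtain ⟨m', hm'⟩ := Set.ncard_eq_one.mp hcone'
      intro m hm
      have h1 : m ∈ Jcl mul v₀ := hm
      have h2 : v₀ ∈ Jcl mul v₀ := eqJ_refl mul v₀
      rw [hm'] at h1 h2
      simp at h1 h2
      rw [h1, h2]
    have htouch : ∀ x ∈ X, ∀ y ∈ X, ∀ z ∈ X, x < y → y < z →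
        eqJ mul (σ x y) v₀ → eqJ mul (σ y z) v₀ → False := by
      intro x hx y hy z hz hxy hyz hf1 hf2
      have h1 : σ x z = mul (σ x y) (σ y z) := (hadd x y z hxy hyz).symm
      rw [hsingle _ hf1, hsingle _ hf2] at h1
      have h2 : leJ mul (σ x z) v₀ := by
        rw [h1]
        exact leR_leJ mul (mul_leR mul v₀ v₀)
      have h3 := hminval x hx z hz (lt_trans hxy hyz) h2
      apply hnidem
      rw [← h1]
      exact hsingle _ h3
    have hdisj : ∀ x ∈ X, ∀ y ∈ X, ∀ x' ∈ X, ∀ y' ∈ X, x < y → x' < y' → y ≤ x' →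
        eqJ mul (σ x y) v₀ → eqJ mul (σ x' y') v₀ → False := by
      intro x hx y hy x' hx' y' hy' hxy hx'y' hyx' hf1 hf2
      rcases eq_or_lt_of_le hyx' with heq | hlt
      · exact htouch x hx y hy y' hy' hxy (heq ▸ hx'y') hf1 (by rw [heq]; exact hf2)
      · have h1 : eqJ mul (σ y y') v₀ :=
          habsR y hy x' hx' y' hy' (le_of_lt hlt) hx'y' hf2
        exact htouch x hx y hy y' hy' hxy (lt_trans hlt hx'y') hf1 h1
    set L : Set α :=
      {u | u ∈ X ∧ ∀ x ∈ X, ∀ y ∈ X, x < y → eqJ mul (σ x y) v₀ → ¬ (y ≤ u)} with hLdef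
    have hLdc : ∀ u ∈ L, ∀ u' ∈ X, u' ≤ u → u' ∈ L := by
      intro u hu u' hu' hle
      exact ⟨hu', fun x hx y hy hxy hf hyu' => hu.2 x hx y hy hxy hf (le_trans hyu' hle)⟩
    have hLfree : ∀ x ∈ L, ∀ y ∈ L, x < y → ¬ eqJ mul (σ x y) v₀ :=
      fun x hx y hy hxy hf => hy.2 x hx.1 y hy.1 hxy hf (le_refl y)
    have hnotL : ∀ u ∈ X, u ∉ L →
        ∃ x ∈ X, ∃ y ∈ X, x < y ∧ eqJ mul (σ x y) v₀ ∧ y ≤ u := by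
      intro u hu hul
      by_contra hcon
      push_neg at hcon
      exact hul ⟨hu, fun x hx y hy hxy hf hyu =>
        absurd (hcon x hx y hy hxy hf) (not_lt.mpr hyu)⟩
    have hRfree : ∀ x ∈ X, x ∉ L → ∀ y ∈ X, y ∉ L → x < y → ¬ eqJ mul (σ x y) v₀ := by
      intro x hx hxl y hy hyl hxy hf
      obtain ⟨x'', hx'', y'', hy'', hxy'', hf'', hle⟩ := hnotL x hx hxl
      exact hdisj x'' hx'' y'' hy'' x hx y hy hxy'' hxy hle hf'' hf
    have hfarL : ∀ x ∈ X, ∀ y ∈ X, x < y → eqJ mul (σ x y) v₀ → x ∈ L := by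
      intro x hx y hy hxy hf
      refine ⟨hx, ?_⟩
      intro x'' hx'' y'' hy'' hxy'' hf'' hle
      exact hdisj x'' hx'' y'' hy'' x hx y hy hxy'' hxy hle hf'' hf
    have hLne : L.Nonempty := by
      obtain ⟨xv, hxv, yv, hyv, hxyv, hfv⟩ := hv₀val
      exact ⟨xv, hfarL xv hxv yv hyv hxyv (by rw [hfv]; exact eqJ_refl mul v₀)⟩
    have hLR : ∀ l ∈ L, ∀ r ∈ X, r ∉ L → l < r := by
      intro l hl r hr hrl
      rcases lt_or_ge l r with hc | hc
      · exact hc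
      · exact absurd (hLdc l hl r hr hc) hrl
    obtain ⟨gL, hgLb, hgLram⟩ := hIH L (fun u hu => hu.1) hLfree
    obtain ⟨gR, hgRb, hgRram⟩ := hIH {u | u ∈ X ∧ u ∉ L} (fun u hu => hu.1)
      (fun x hx y hy hxy => hRfree x hx.1 hx.2 y hy.1 hy.2 hxy)
    obtain ⟨mL, hmL⟩ := top_tail L hLne gL h (fun x hx => (hgLb x hx).2)
    set DD : Set α := {z | z ∈ L ∧ gL z = mL ∧ ∀ w ∈ L, z < w → gL w ≤ mL} with hDDdef
    have hDcof : ∀ q ∈ L, ∃ d ∈ DD, q ≤ d := by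
      intro q hq
      obtain ⟨d, hd, h1, h2, h3⟩ := hmL q hq
      exact ⟨d, ⟨hd, h2, h3⟩, h1⟩
    have hmLh : mL ≤ h := by
      obtain ⟨d, hd, _, h2, _⟩ := hmL hLne.choose hLne.choose_spec
      rw [← h2]
      exact (hgLb d hd).2
    set g : α → ℕ := fun z => if z ∈ L then (if z ∈ DD then h+1 else gL z) else gR z
      with hgdef
    have hgD : ∀ z ∈ DD, g z = h + 1 := by
      intro z hz
      rw [hgdef]
      simp only [if_pos hz.1, if_pos hz]
    have hgL' : ∀ z ∈ L, z ∉ DD → g z = gL z := by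
      intro z hz hzD
      rw [hgdef]
      simp only [if_pos hz, if_neg hzD]
    have hgR' : ∀ z, z ∉ L → g z = gR z := by
      intro z hz
      rw [hgdef]
      simp only [if_neg hz]
    refine ⟨g, ?_, ?_⟩
    · intro x hx
      have harith : h + 1 ≤ max 1 (2 * j) := by
        rw [hh]
        omega
      by_cases hxL : x ∈ L
      · by_cases hxD : x ∈ DD
        · rw [hgD x hxD]; omega
        · rw [hgL' x hxL hxD]
          have := hgLb x hxL
          omega
      · rw [hgR' x hxL]
        have := hgRb x ⟨hx, hxL⟩
        omega
    · intro y₀ hy₀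
      by_cases hy₀L : y₀ ∈ L
      · by_cases hy₀D : y₀ ∈ DD
        · -- D-point
          have hgy₀ : g y₀ = h + 1 := hgD y₀ hy₀D
          have hmem : ∀ y ∈ X, NeighbourOn X g y₀ y → y ∈ DD := by
            intro y hy hn
            have h1 : g y = h + 1 := by rw [← hn.1]; exact hgy₀
            by_cases hyL : y ∈ L
            · by_cases hyD : y ∈ DD
              · exact hyD
              · rw [hgL' y hyL hyD] at h1
                have := (hgLb y hyL).2
                omega
            · rw [hgR' y hyL] at h1
              have := (hgRb y ⟨hy, hyL⟩).2
              omega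
          obtain ⟨e, he, heprop⟩ := hgLram y₀ hy₀L
          refine ⟨e, he, ?_⟩
          intro x hx y hy hnx hny hxy
          have hxD := hmem x hx hnx
          have hyD := hmem y hy hny
          have hnp : ∀ z, z ∈ DD → NeighbourOn L gL y₀ z := by
            intro z hzD
            constructor
            · rw [hy₀D.2.1, hzD.2.1]
            · intro w hwL hw1 hw2
              rw [hy₀D.2.1]
              rcases le_total y₀ z with hyz | hyz
              · rw [min_eq_left hyz] at hw1
                rcases eq_or_lt_of_le hw1 with heq | hw1'
                · rw [← heq]
                  exact le_of_eq hy₀D.2.1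
                · exact hy₀D.2.2 w hwL hw1'
              · rw [min_eq_right hyz] at hw1
                rcases eq_or_lt_of_le hw1 with heq | hw1'
                · rw [← heq]
                  exact le_of_eq hzD.2.1
                · exact hzD.2.2 w hwL hw1'
          exact heprop x hxD.1 y hyD.1 (hnp x hxD) (hnp y hyD) hxy
        · -- L-interior
          have hgy₀ : g y₀ = gL y₀ := hgL' y₀ hy₀L hy₀D
          have hgy₀h : g y₀ ≤ h := by
            rw [hgy₀]; exact (hgLb y₀ hy₀L).2
          have hmem : ∀ y ∈ X, NeighbourOn X g y₀ y → (y ∈ L ∧ y ∉ DD) := by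
            intro y hy hn
            have h1 : g y = g y₀ := hn.1.symm
            by_cases hyL : y ∈ L
            · refine ⟨hyL, ?_⟩
              intro hyD
              rw [hgD y hyD] at h1
              omega
            · exfalso
              -- y right of the cut : a D blocker lies strictly between
              have hy₀y : y₀ < y := hLR y₀ hy₀L y hy hyL
              obtain ⟨d, hdD, hy₀d⟩ := hDcof y₀ hy₀L
              have hdy₀ : y₀ < d := by
                rcases eq_or_lt_of_le hy₀d with heq | hq
                · exfalso
                  apply hy₀D
                  rw [heq]
                  exact hdD
                · exact hq
              have hdy : d < y := hLR d hdD.1 y hy hyL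
              have h3 := hn.2 d hdD.1.1 (le_trans (min_le_left _ _) (le_of_lt hdy₀))
                (le_trans (le_of_lt hdy) (le_max_right _ _))
              rw [hgD d hdD] at h3
              omega
          obtain ⟨e, he, heprop⟩ := hgLram y₀ hy₀L
          refine ⟨e, he, ?_⟩
          intro x hx y hy hnx hny hxy
          have hxm := hmem x hx hnx
          have hym := hmem y hy hny
          have htrans : ∀ z ∈ X, NeighbourOn X g y₀ z → z ∈ L → z ∉ DD →
              NeighbourOn L gL y₀ z := by
            intro z hz hn hzL hzD
            constructor
            · have h1 : g z = g y₀ := hn.1.symm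
              rw [hgL' z hzL hzD, hgy₀] at h1
              omega
            · intro w hwL hw1 hw2
              have h4 := hn.2 w hwL.1 hw1 hw2
              have hwD : w ∉ DD := by
                intro hwD
                rw [hgD w hwD] at h4
                omega
              rw [hgL' w hwL hwD, hgy₀] at h4
              exact h4
          exact heprop x hxm.1 y hym.1 (htrans x hx hnx hxm.1 hxm.2)
            (htrans y hy hny hym.1 hym.2) hxy
      · -- R part
        have hgy₀ : g y₀ = gR y₀ := hgR' y₀ hy₀L
        have hgy₀h : g y₀ ≤ h := by
          rw [hgy₀]; exact (hgRb y₀ ⟨hy₀, hy₀L⟩).2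
        have hmem : ∀ y ∈ X, NeighbourOn X g y₀ y → y ∉ L := by
          intro y hy hn hyL
          have h1 : g y = g y₀ := hn.1.symm
          have hyD : y ∉ DD := by
            intro hyD
            rw [hgD y hyD] at h1
            omega
          have hyy₀ : y < y₀ := hLR y hyL y₀ hy₀ hy₀L
          obtain ⟨d, hdD, hyd⟩ := hDcof y hyL
          have hdy : y < d := by
            rcases eq_or_lt_of_le hyd with heq | hq
            · exact absurd hdD (by rw [← heq]; exact hyD)
            · exact hq
          have hdy₀ : d < y₀ := hLR d hdD.1 y₀ hy₀ hy₀L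
          have h3 := hn.2 d hdD.1.1 (le_trans (min_le_right _ _) (le_of_lt hdy))
            (le_trans (le_of_lt hdy₀) (le_max_left _ _))
          rw [hgD d hdD] at h3
          omega
        obtain ⟨e, he, heprop⟩ := hgRram y₀ ⟨hy₀, hy₀L⟩
        refine ⟨e, he, ?_⟩
        intro x hx y hy hnx hny hxy
        have hxm := hmem x hx hnx
        have hym := hmem y hy hny
        have htrans : ∀ z ∈ X, NeighbourOn X g y₀ z → z ∉ L →
            NeighbourOn {u | u ∈ X ∧ u ∉ L} gR y₀ z := by
          intro z hz hn hzL
          constructor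
          · have h1 : g z = g y₀ := hn.1.symm
            rw [hgR' z hzL, hgy₀] at h1
            omega
          · intro w hwR hw1 hw2
            have h4 := hn.2 w hwR.1 hw1 hw2
            rw [hgR' w hwR.2, hgy₀] at h4
            exact h4
        exact heprop x ⟨hx, hxm⟩ y ⟨hy, hym⟩ (htrans x hx hnx hxm)
          (htrans y hy hny hym) hxy
  · -- ===================== maximal far clique construction =====================
    obtain ⟨WX, hWsub, hWfar, hWmax⟩ := exists_max_clique X (fun x y => eqJ mul (σ x y) v₀)
    have hdich : ∀ z ∈ X, z ∉ WX → LHp mul σ WX v₀ z ∨ RHp mul σ WX v₀ z := by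
      intro z hz hzW
      rcases hWmax z hz hzW with hbad | hbad
      · exact absurd hWfar hbad
      · by_contra hcon
        push_neg at hcon
        apply hbad
        constructor
        · intro x hxW hxz
          by_contra hne
          exact hne (hcon.1 x hxW hxz)
        · intro y hyW hzy
          by_contra hne
          exact hne (hcon.2 y hyW hzy)
    have hsgrefl : ∀ z, sameGapp WX z z := by
      intro z w hw hcon
      simp only [min_self, max_self] at hcon
      exact absurd hcon.2 (not_lt.mpr (le_of_lt hcon.1))
    have hsgsymm : ∀ z z', sameGapp WX z z' → sameGapp WX z' z := by
      intro z z' hs w hw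
      rw [min_comm, max_comm]
      exact hs w hw
    have hsgtrans : ∀ z z' z'', z' ∉ WX → sameGapp WX z z' → sameGapp WX z' z'' →
        sameGapp WX z z'' := by
      intro z z' z'' hz' h1 h2 w hw hcon
      have ha := h1 w hw
      have hb := h2 w hw
      rw [not_and_or, not_lt, not_lt] at ha hb
      rcases ha with ha | ha <;> rcases hb with hb | hb
      · have hle : w ≤ min z z'' :=
          le_min (le_trans ha (min_le_left _ _)) (le_trans hb (min_le_right _ _))
        exact absurd hcon.1 (not_lt.mpr hle)
      · have h3 : w ≤ z' := le_trans ha (min_le_right _ _)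
        have h4 : z' ≤ w := le_trans (le_max_left _ _) hb
        exact hz' ((le_antisymm h3 h4) ▸ hw)
      · have h3 : z' ≤ w := le_trans (le_max_right _ _) ha
        have h4 : w ≤ z' := le_trans hb (min_le_left _ _)
        exact hz' ((le_antisymm h4 h3) ▸ hw)
      · have hle : max z z'' ≤ w :=
          max_le (le_trans (le_max_left _ _) ha) (le_trans (le_max_right _ _) hb)
        exact absurd hcon.2 (not_lt.mpr hle)
    have hQse : ∀ z ∈ X, z ∉ WX → z ∈ Qp mul σ X WX v₀ z :=
      fun z hz hzW => ⟨hz, hzW, hsgrefl z, Iff.rfl⟩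
    have hQeq : ∀ z, z ∉ WX → ∀ z' ∈ Qp mul σ X WX v₀ z,
        Qp mul σ X WX v₀ z' = Qp mul σ X WX v₀ z := by
      intro z hzW z' hz'
      obtain ⟨hz'X, hz'W, hsg', hiff'⟩ := hz'
      ext z''
      constructor
      · rintro ⟨h1, h2, h3, h4⟩
        exact ⟨h1, h2, hsgtrans z z' z'' hz'W hsg' h3, h4.trans hiff'⟩
      · rintro ⟨h1, h2, h3, h4⟩
        exact ⟨h1, h2, hsgtrans z' z z'' hzW (hsgsymm _ _ hsg') h3, h4.trans hiff'.symm⟩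
    have hclique : ∀ z₀ ∈ X, z₀ ∉ WX → ∀ z ∈ Qp mul σ X WX v₀ z₀, ∀ z' ∈ Qp mul σ X WX v₀ z₀,
        z < z' → ¬ eqJ mul (σ z z') v₀ := by
      intro z₀ hz₀ hz₀W z hz z' hz' hzz' hfar
      obtain ⟨hzX, hzW, hsg1, hiff1⟩ := hz
      obtain ⟨hz'X, hz'W, hsg2, hiff2⟩ := hz'
      have hsg3 : sameGapp WX z z' := hsgtrans z z₀ z' hz₀W (hsgsymm _ _ hsg1) hsg2
      by_cases hLHz' : LHp mul σ WX v₀ z'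
      · obtain ⟨w, hwW, hwz', hwcl⟩ := hLHz'
        have hwz : w < z := by
          rcases lt_trichotomy w z with hc | hc | hc
          · exact hc
          · exact absurd (hc ▸ hwW) hzW
          · exfalso
            apply hsg3 w hwW
            constructor
            · exact lt_of_le_of_lt (min_le_left _ _) hc
            · exact lt_of_lt_of_le hwz' (le_max_right _ _)
        exact hwcl (habsR w (hWsub hwW) z hzX z' hz'X (le_of_lt hwz) hzz' hfar)
      · have hLHz : ¬ LHp mul σ WX v₀ z := fun hcl => hLHz' (hiff2.mpr (hiff1.mp hcl))
        rcases hdich z hzX hzW with hl | hr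
        · exact hLHz hl
        · obtain ⟨w, hwW, hzw, hwcl⟩ := hr
          have hz'w : z' < w := by
            rcases lt_trichotomy z' w with hc | hc | hc
            · exact hc
            · exact absurd (hc ▸ hwW) hz'W
            · exfalso
              apply hsg3 w hwW
              constructor
              · exact lt_of_le_of_lt (min_le_left _ _) hzw
              · exact lt_of_lt_of_le hc (le_max_right _ _)
          exact hwcl (habsL z hzX z' hz'X w (hWsub hwW) hzz' (le_of_lt hz'w) hfar)
    have hord : ∀ z ∈ X, ∀ z' ∈ X, z ∉ WX → z' ∉ WX → sameGapp WX z z' →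
        LHp mul σ WX v₀ z → ¬ LHp mul σ WX v₀ z' → z < z' := by
      intro z hz z' hz' hzW hz'W hsg hLHz hLHz'
      rcases lt_trichotomy z z' with hc | hc | hc
      · exact hc
      · exact absurd (hc ▸ hLHz) hLHz'
      · exfalso
        obtain ⟨w, hwW, hwz, hwcl⟩ := hLHz
        have hwz' : w < z' := by
          rcases lt_trichotomy w z' with hc1 | hc1 | hc1
          · exact hc1
          · exact absurd (hc1 ▸ hwW) hz'W
          · exfalso
            apply hsg w hwW
            constructor
            · exact lt_of_le_of_lt (min_le_right _ _) hc1
            · exact lt_of_lt_of_le hwz (le_max_left _ _)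
        apply hLHz'
        refine ⟨w, hwW, hwz', ?_⟩
        intro hfar
        exact hwcl (habsL w (hWsub hwW) z' hz' z hz hwz' (le_of_lt hc) hfar)
    -- recursive splits for the pieces
    have hsp' : ∀ S : Set α, ∃ g : α → ℕ,
        (S ⊆ X ∧ (∀ x ∈ S, ∀ y ∈ S, x < y → ¬ eqJ mul (σ x y) v₀)) →
        ((∀ x ∈ S, 1 ≤ g x ∧ g x ≤ h) ∧ RamseianOn mul σ S g) := by
      intro S
      by_cases hS : S ⊆ X ∧ (∀ x ∈ S, ∀ y ∈ S, x < y → ¬ eqJ mul (σ x y) v₀)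
      · obtain ⟨g, hg1, hg2⟩ := hIH S hS.1 hS.2
        exact ⟨g, fun _ => ⟨hg1, hg2⟩⟩
      · exact ⟨fun _ => 1, fun hcon => absurd hcon hS⟩
    choose sp hsp2 using hsp'
    have hQvalid : ∀ z ∈ X, z ∉ WX →
        ((∀ x ∈ Qp mul σ X WX v₀ z, 1 ≤ sp (Qp mul σ X WX v₀ z) x ∧
            sp (Qp mul σ X WX v₀ z) x ≤ h) ∧
          RamseianOn mul σ (Qp mul σ X WX v₀ z) (sp (Qp mul σ X WX v₀ z))) :=
      fun z hz hzW => hsp2 _ ⟨fun z' hz' => hz'.1, hclique z hz hzW⟩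
    -- top tails
    have hms' : ∀ S : Set α, ∃ m : ℕ, (S.Nonempty ∧ ∀ x ∈ S, sp S x ≤ h) →
        ∀ q ∈ S, ∃ d ∈ S, q ≤ d ∧ sp S d = m ∧ ∀ w ∈ S, d < w → sp S w ≤ m := by
      intro S
      by_cases hS : S.Nonempty ∧ ∀ x ∈ S, sp S x ≤ h
      · obtain ⟨m, hm⟩ := top_tail S hS.1 (sp S) h hS.2
        exact ⟨m, fun _ => hm⟩
      · exact ⟨0, fun hcon => absurd hcon hS⟩
    choose ms hms using hms'
    set D : Set α → Set α :=
      fun S => {z | z ∈ S ∧ sp S z = ms S ∧ ∀ w ∈ S, z < w → sp S w ≤ ms S} with hD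
    have hDcof : ∀ z ∈ X, z ∉ WX → ∀ q ∈ Qp mul σ X WX v₀ z,
        ∃ d ∈ D (Qp mul σ X WX v₀ z), q ≤ d := by
      intro z hz hzW q hq
      have hne : (Qp mul σ X WX v₀ z).Nonempty := ⟨z, hQse z hz hzW⟩
      have hb := (hQvalid z hz hzW).1
      obtain ⟨d, hd, hqd, hdm, hdt⟩ := hms _ ⟨hne, fun x hx => (hb x hx).2⟩ q hq
      exact ⟨d, ⟨hd, hdm, hdt⟩, hqd⟩
    -- top split on WX
    have hsH : ∃ gW : α → ℕ, ∃ sH : ℕ, sH = (if c = 1 then 1 else 2*c - 1) ∧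
        (∀ w ∈ WX, 1 ≤ gW w ∧ gW w ≤ sH) ∧ RamseianOn mul σ WX gW := by
      by_cases hcone : c = 1
      · have hidem : mul v₀ v₀ = v₀ := by
          by_contra hni
          exact hsp ⟨hcone, hni⟩
        have hsingle : ∀ m, eqJ mul m v₀ → m = v₀ := by
          have hcone' : (Jcl mul v₀).ncard = 1 := by rw [← hcc]; exact hcone
          obtain ⟨m', hm'⟩ := Set.ncard_eq_one.mp hcone'
          intro m hm
          have h1 : m ∈ Jcl mul v₀ := hm
          have h2 : v₀ ∈ Jcl mul v₀ := eqJ_refl mul v₀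
          rw [hm'] at h1 h2
          simp at h1 h2
          rw [h1, h2]
        refine ⟨fun _ => 1, 1, by simp [hcone], fun w hw => ⟨le_refl 1, le_refl 1⟩, ?_⟩
        intro w₀ hw₀
        exact ⟨v₀, hidem, fun x hx y hy _ _ hxy => hsingle _ (hWfar x hx y hy hxy)⟩
      · obtain ⟨gW, hgWb, hgWram⟩ := smooth mul σ hassoc hadd WX v₀ hWfar
        refine ⟨gW, 2*c - 1, by simp [hcone], ?_, hgWram⟩
        intro w hw
        have h1 := hgWb w hw
        rw [← hcc] at h1
        have hcge : 2 ≤ c := by omega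
        constructor
        · exact h1.1
        · refine le_trans h1.2 ?_
          omega
    obtain ⟨gW, sH, hsHeq, hgWb, hgWram⟩ := hsH
    have hsH1 : 1 ≤ sH := by rw [hsHeq]; split <;> omega
    -- the combined split
    set g : α → ℕ := fun z =>
      if z ∈ WX then h + 1 + gW z
      else if z ∈ X ∧ LHp mul σ WX v₀ z ∧ z ∈ D (Qp mul σ X WX v₀ z) then h + 1
      else sp (Qp mul σ X WX v₀ z) z with hgdef
    have hgW' : ∀ z ∈ WX, g z = h + 1 + gW z := by
      intro z hz
      rw [hgdef]
      simp only [if_pos hz]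
    have hgD : ∀ z ∈ X, z ∉ WX → LHp mul σ WX v₀ z → z ∈ D (Qp mul σ X WX v₀ z) →
        g z = h + 1 := by
      intro z hz hzW hLH hDz
      rw [hgdef]
      simp only [if_neg hzW, if_pos (⟨hz, hLH, hDz⟩ :
        z ∈ X ∧ LHp mul σ WX v₀ z ∧ z ∈ D (Qp mul σ X WX v₀ z))]
    have hgI : ∀ z, z ∉ WX → ¬ (z ∈ X ∧ LHp mul σ WX v₀ z ∧ z ∈ D (Qp mul σ X WX v₀ z)) →
        g z = sp (Qp mul σ X WX v₀ z) z := by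
      intro z hzW hnc
      rw [hgdef]
      simp only [if_neg hzW, if_neg hnc]
    have hIbound : ∀ z ∈ X, z ∉ WX →
        1 ≤ sp (Qp mul σ X WX v₀ z) z ∧ sp (Qp mul σ X WX v₀ z) z ≤ h :=
      fun z hz hzW => (hQvalid z hz hzW).1 z (hQse z hz hzW)
    have hMW : ∀ z ∈ X, h + 2 ≤ g z → z ∈ WX := by
      intro z hz hge
      by_contra hzW
      by_cases hcnd : z ∈ X ∧ LHp mul σ WX v₀ z ∧ z ∈ D (Qp mul σ X WX v₀ z)
      · rw [hgD z hz hzW hcnd.2.1 hcnd.2.2] at hge; omega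
      · rw [hgI z hzW hcnd] at hge
        have := (hIbound z hz hzW).2
        omega
    have hMD : ∀ z ∈ X, g z = h + 1 →
        z ∉ WX ∧ LHp mul σ WX v₀ z ∧ z ∈ D (Qp mul σ X WX v₀ z) := by
      intro z hz hge
      have hzW : z ∉ WX := by
        intro hzW
        rw [hgW' z hzW] at hge
        have := (hgWb z hzW).1
        omega
      refine ⟨hzW, ?_⟩
      by_cases hcnd : z ∈ X ∧ LHp mul σ WX v₀ z ∧ z ∈ D (Qp mul σ X WX v₀ z)
      · exact hcnd.2
      · rw [hgI z hzW hcnd] at hge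
        have := (hIbound z hz hzW).2
        omega
    have hMI : ∀ z ∈ X, g z ≤ h →
        z ∉ WX ∧ g z = sp (Qp mul σ X WX v₀ z) z ∧
          ¬ (z ∈ X ∧ LHp mul σ WX v₀ z ∧ z ∈ D (Qp mul σ X WX v₀ z)) := by
      intro z hz hge
      have hzW : z ∉ WX := by
        intro hzW
        rw [hgW' z hzW] at hge
        have := (hgWb z hzW).1
        omega
      have hcnd : ¬ (z ∈ X ∧ LHp mul σ WX v₀ z ∧ z ∈ D (Qp mul σ X WX v₀ z)) := by
        intro hcnd
        rw [hgD z hz hzW hcnd.2.1 hcnd.2.2] at hge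
        omega
      exact ⟨hzW, hgI z hzW hcnd, hcnd⟩
    refine ⟨g, ?_, ?_⟩
    · -- bounds
      intro x hx
      have harith : h + 1 + sH ≤ max 1 (2 * j) := by
        rw [hh, hsHeq]
        split <;> omega
      by_cases hxW : x ∈ WX
      · rw [hgW' x hxW]
        have h1 := hgWb x hxW
        omega
      · by_cases hcnd : x ∈ X ∧ LHp mul σ WX v₀ x ∧ x ∈ D (Qp mul σ X WX v₀ x)
        · rw [hgD x hx hxW hcnd.2.1 hcnd.2.2]
          omega
        · rw [hgI x hxW hcnd]
          have h1 := hIbound x hx hxW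
          omega
    · -- Ramseian
      intro y₀ hy₀
      rcases Nat.lt_or_ge (g y₀) (h+1) with hgy | hgy
      · -- ============ interior case ============
        have hgy' : g y₀ ≤ h := by omega
        obtain ⟨hy₀W, hgy₀eq, hy₀nd⟩ := hMI y₀ hy₀ hgy'
        have hmem : ∀ y ∈ X, NeighbourOn X g y₀ y → y ∈ Qp mul σ X WX v₀ y₀ := by
          intro y hy hn
          have hgyy : g y = g y₀ := hn.1.symm
          obtain ⟨hyW, hgyeq, hynd⟩ := hMI y hy (by omega)
          by_contra hyQ
          have hsgy : sameGapp WX y₀ y := by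
            intro w hwW hcon
            have h3 := hn.2 w (hWsub hwW) (le_of_lt hcon.1) (le_of_lt hcon.2)
            have h4 : 1 ≤ gW w := (hgWb w hwW).1
            have h5 : g w = h + 1 + gW w := hgW' w hwW
            omega
          have hniff : ¬ (LHp mul σ WX v₀ y ↔ LHp mul σ WX v₀ y₀) :=
            fun hiff => hyQ ⟨hy, hyW, hsgy, hiff⟩
          rcases Classical.em (LHp mul σ WX v₀ y₀) with hL0 | hL0
          · have hLy : ¬ LHp mul σ WX v₀ y := fun hLy => hniff (iff_of_true hLy hL0)
            have hord1 : y₀ < y := hord y₀ hy₀ y hy hy₀W hyW hsgy hL0 hLy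
            obtain ⟨d, hdD, hy₀d⟩ := hDcof y₀ hy₀ hy₀W y₀ (hQse y₀ hy₀ hy₀W)
            have hdQ : d ∈ Qp mul σ X WX v₀ y₀ := hdD.1
            have hdX : d ∈ X := hdQ.1
            have hdW : d ∉ WX := hdQ.2.1
            have hdLH : LHp mul σ WX v₀ d := hdQ.2.2.2.mpr hL0
            have hdD' : d ∈ D (Qp mul σ X WX v₀ d) := by
              rw [hQeq y₀ hy₀W d hdQ]
              exact hdD
            have hgd : g d = h + 1 := hgD d hdX hdW hdLH hdD'
            have hdy₀ : y₀ < d := by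
              rcases eq_or_lt_of_le hy₀d with rfl | hq
              · exfalso; omega
              · exact hq
            have hsgdy : sameGapp WX d y :=
              hsgtrans d y₀ y hy₀W (hsgsymm _ _ hdQ.2.2.1) hsgy
            have hdy : d < y := hord d hdX y hy hdW hyW hsgdy hdLH hLy
            have h3 := hn.2 d hdX (le_trans (min_le_left _ _) (le_of_lt hdy₀))
              (le_trans (le_of_lt hdy) (le_max_right _ _))
            omega
          · have hLy : LHp mul σ WX v₀ y := by
              by_contra hLy
              exact hniff (iff_of_false hLy hL0)
            have hord1 : y < y₀ := hord y hy y₀ hy₀ hyW hy₀W (hsgsymm _ _ hsgy) hLy hL0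
            obtain ⟨d, hdD, hyd⟩ := hDcof y hy hyW y (hQse y hy hyW)
            have hdQ : d ∈ Qp mul σ X WX v₀ y := hdD.1
            have hdX : d ∈ X := hdQ.1
            have hdW : d ∉ WX := hdQ.2.1
            have hdLH : LHp mul σ WX v₀ d := hdQ.2.2.2.mpr hLy
            have hdD' : d ∈ D (Qp mul σ X WX v₀ d) := by
              rw [hQeq y hyW d hdQ]
              exact hdD
            have hgd : g d = h + 1 := hgD d hdX hdW hdLH hdD'
            have hdy : y < d := by
              rcases eq_or_lt_of_le hyd with rfl | hq
              · exfalso; omega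
              · exact hq
            have hsgdy : sameGapp WX d y₀ :=
              hsgtrans d y y₀ hyW (hsgsymm _ _ hdQ.2.2.1) (hsgsymm _ _ hsgy)
            have hdy₀ : d < y₀ := hord d hdX y₀ hy₀ hdW hy₀W hsgdy hdLH hL0
            have h3 := hn.2 d hdX (le_trans (min_le_right _ _) (le_of_lt hdy))
              (le_trans (le_of_lt hdy₀) (le_max_left _ _))
            omega
        obtain ⟨e, he, heprop⟩ := (hQvalid y₀ hy₀ hy₀W).2 y₀ (hQse y₀ hy₀ hy₀W)
        refine ⟨e, he, ?_⟩
        intro x hx y hy hnx hny hxy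
        have hxQ := hmem x hx hnx
        have hyQ := hmem y hy hny
        have htrans : ∀ z ∈ X, NeighbourOn X g y₀ z → z ∈ Qp mul σ X WX v₀ y₀ →
            NeighbourOn (Qp mul σ X WX v₀ y₀) (sp (Qp mul σ X WX v₀ y₀)) y₀ z := by
          intro z hz hn hzQ
          have h1 : g z = g y₀ := hn.1.symm
          obtain ⟨hzW, hgzeq, hznd⟩ := hMI z hz (by omega)
          have h3 : Qp mul σ X WX v₀ z = Qp mul σ X WX v₀ y₀ := hQeq y₀ hy₀W z hzQ
          constructor
          · rw [← hgy₀eq]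
            rw [h3] at hgzeq
            rw [← hgzeq]
            exact h1.symm
          · intro w hwQ hw1 hw2
            have hwX : w ∈ X := hwQ.1
            have h4 := hn.2 w hwX hw1 hw2
            obtain ⟨hwW, hgweq, hwnd⟩ := hMI w hwX (by omega)
            have h5 : Qp mul σ X WX v₀ w = Qp mul σ X WX v₀ y₀ := hQeq y₀ hy₀W w hwQ
            rw [h5] at hgweq
            rw [← hgweq, ← hgy₀eq]
            omega
        exact heprop x hxQ y hyQ (htrans x hx hnx hxQ) (htrans y hy hny hyQ) hxy
      rcases Nat.lt_or_ge (g y₀) (h+2) with hgy2 | hgy2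
      · -- ============ D-point case ============
        have hgyeq : g y₀ = h + 1 := by omega
        obtain ⟨hy₀W, hy₀LH, hy₀D⟩ := hMD y₀ hy₀ hgyeq
        have hy₀Q : y₀ ∈ Qp mul σ X WX v₀ y₀ := hQse y₀ hy₀ hy₀W
        have hy₀D0 : y₀ ∈ D (Qp mul σ X WX v₀ y₀) := hy₀D
        have hmem : ∀ y ∈ X, NeighbourOn X g y₀ y → y ∈ D (Qp mul σ X WX v₀ y₀) := by
          intro y hy hn
          have hgyy : g y = h + 1 := by rw [← hn.1]; exact hgyeq
          obtain ⟨hyW, hyLH, hyD⟩ := hMD y hy hgyy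
          have hsgy : sameGapp WX y₀ y := by
            intro w hwW hcon
            have h3 := hn.2 w (hWsub hwW) (le_of_lt hcon.1) (le_of_lt hcon.2)
            have h4 : 1 ≤ gW w := (hgWb w hwW).1
            have h5 : g w = h + 1 + gW w := hgW' w hwW
            omega
          have hyQ : y ∈ Qp mul σ X WX v₀ y₀ := ⟨hy, hyW, hsgy, iff_of_true hyLH hy₀LH⟩
          have h6 : Qp mul σ X WX v₀ y = Qp mul σ X WX v₀ y₀ := hQeq y₀ hy₀W y hyQ
          rw [← h6]
          exact hyD
        obtain ⟨e, he, heprop⟩ := (hQvalid y₀ hy₀ hy₀W).2 y₀ hy₀Q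
        refine ⟨e, he, ?_⟩
        intro x hx y hy hnx hny hxy
        have hxD := hmem x hx hnx
        have hyD := hmem y hy hny
        have hnp : ∀ z, z ∈ D (Qp mul σ X WX v₀ y₀) →
            NeighbourOn (Qp mul σ X WX v₀ y₀) (sp (Qp mul σ X WX v₀ y₀)) y₀ z := by
          intro z hzD
          constructor
          · rw [hy₀D0.2.1, hzD.2.1]
          · intro w hwQ hw1 hw2
            rw [hy₀D0.2.1]
            rcases le_total y₀ z with hyz | hyz
            · rw [min_eq_left hyz] at hw1
              rcases eq_or_lt_of_le hw1 with heq | hw1'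
              · rw [← heq]
                exact le_of_eq hy₀D0.2.1
              · exact hy₀D0.2.2 w hwQ hw1'
            · rw [min_eq_right hyz] at hw1
              rcases eq_or_lt_of_le hw1 with heq | hw1'
              · rw [← heq]
                exact le_of_eq hzD.2.1
              · exact hzD.2.2 w hwQ hw1'
        exact heprop x hxD.1 y hyD.1 (hnp x hxD) (hnp y hyD) hxy
      · -- ============ WX case ============
        have hy₀W : y₀ ∈ WX := hMW y₀ hy₀ hgy2
        obtain ⟨e, he, heprop⟩ := hgWram y₀ hy₀W
        refine ⟨e, he, ?_⟩
        intro x hx y hy hnx hny hxy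
        have hmem : ∀ z ∈ X, NeighbourOn X g y₀ z → z ∈ WX := by
          intro z hz hn
          apply hMW z hz
          rw [← hn.1]
          exact hgy2
        have htrans : ∀ z ∈ X, NeighbourOn X g y₀ z → NeighbourOn WX gW y₀ z := by
          intro z hz hn
          have hzW := hmem z hz hn
          constructor
          · have h1 : g y₀ = g z := hn.1
            rw [hgW' y₀ hy₀W, hgW' z hzW] at h1
            omega
          · intro w hwW hw1 hw2
            have h2 := hn.2 w (hWsub hwW) hw1 hw2
            rw [hgW' w hwW, hgW' y₀ hy₀W] at h2
            omega
        exact heprop x (hmem x hx hnx) y (hmem y hy hny)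
          (htrans x hx hnx) (htrans y hy hny) hxy


end Main

end SplitOrd


/-- for every finite semigroup `(M, ·)`, every linear order `α`
and every additive labelling `σ` from `α` to `M`, there is a split
`g : α → {1, …, n}` of height `n ≤ 2|M|` that is Ramseian for `σ`. -/
theorem exists_ramseian_split {α M : Type} [LinearOrder α] [Finite M]
    (mul : M → M → M) (hassoc : ∀ a b c : M, mul (mul a b) c = mul a (mul b c))
    (σ : α → α → M)
    (hadd : ∀ x y z : α, x < y → y < z → mul (σ x y) (σ y z) = σ x z) :
    ∃ n : ℕ, n ≤ 2 * Nat.card M ∧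
      ∃ g : α → ℕ, (∀ x : α, 1 ≤ g x ∧ g x ≤ n) ∧ IsRamseian mul g σ := by
  classical
  refine ⟨2 * Nat.card M, le_refl _, ?_⟩
  rcases isEmpty_or_nonempty α with hα | hα
  · exact ⟨fun _ => 1, fun x => (IsEmpty.false x).elim, fun x₀ => (IsEmpty.false x₀).elim⟩
  · have hMne : Nonempty M := ⟨σ (Classical.arbitrary α) (Classical.arbitrary α)⟩
    have hcard1 : 0 < Nat.card M := Nat.card_pos
    have hk : (SplitOrd.Jsat mul σ (Set.univ : Set α)).ncard ≤ Nat.card M := by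
      have h1 := Set.ncard_le_ncard
        (Set.subset_univ (SplitOrd.Jsat mul σ (Set.univ : Set α))) Set.finite_univ
      rwa [Set.ncard_univ] at h1
    obtain ⟨g, hgb, hgram⟩ :=
      SplitOrd.main_split mul σ hassoc hadd (Nat.card M) Set.univ hk
    refine ⟨g, ?_, ?_⟩
    · intro x
      have h1 := hgb x (Set.mem_univ x)
      have h2 : max 1 (2 * (SplitOrd.Jsat mul σ (Set.univ : Set α)).ncard) ≤
          2 * Nat.card M := by omega
      exact ⟨h1.1, le_trans h1.2 h2⟩
    · intro x₀
      obtain ⟨e, he, heprop⟩ := hgram x₀ (Set.mem_univ x₀)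
      refine ⟨e, he, ?_⟩
      intro x y hnx hny hxy
      apply heprop x (Set.mem_univ x) y (Set.mem_univ y) ?_ ?_ hxy
      · exact ⟨hnx.1, fun z _ => hnx.2 z⟩
      · exact ⟨hny.1, fun z _ => hny.2 z⟩
end

section
/- Let α be a countable linear order. For every condensation ∼ of α there exists a subset X ⊆ α such that ∼ coincides with ≈_X, i.e., for all x ≤ y in α: x ∼ y if and only if the closed interval [x,y] is contained in X or [x,y] is disjoint from X. -/
open Classical Set
set_option linter.unusedSectionVars false
set_option maxHeartbeats 1000000

section Cond
variable {α : Type} [LinearOrder α]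

/-- pick an element of `S` with minimal `e`-code. -/
noncomputable def pickMin (e : α → ℕ) (S : Set α) (h : S.Nonempty) : α :=
  (Nat.sInf_mem (h.image e)).choose

lemma pickMin_spec (e : α → ℕ) (S : Set α) (h : S.Nonempty) :
    pickMin e S h ∈ S ∧ e (pickMin e S h) = sInf (e '' S) :=
  (Nat.sInf_mem (h.image e)).choose_spec

lemma pickMin_mem (e : α → ℕ) (S : Set α) (h : S.Nonempty) : pickMin e S h ∈ S :=
  (pickMin_spec e S h).1

lemma pickMin_le (e : α → ℕ) (S : Set α) (h : S.Nonempty) {w : α} (hw : w ∈ S) :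
    e (pickMin e S h) ≤ e w := by
  rw [(pickMin_spec e S h).2]
  exact Nat.sInf_le ⟨w, hw, rfl⟩

/-- pick the maximum element of a finite nonempty set. -/
noncomputable def pickMax (S : Set α) (hf : S.Finite) (h : S.Nonempty) : α :=
  hf.toFinset.max' (by simpa using h)

lemma pickMax_mem (S : Set α) (hf : S.Finite) (h : S.Nonempty) : pickMax S hf h ∈ S := by
  have := hf.toFinset.max'_mem (by simpa using h)
  simpa [pickMax] using this

lemma le_pickMax (S : Set α) (hf : S.Finite) (h : S.Nonempty) {w : α} (hw : w ∈ S) :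
    w ≤ pickMax S hf h :=
  hf.toFinset.le_max' w (by simpa using hw)

/-- same block: only finitely many classes between. -/
def SB (rep : α → α) (a b : α) : Prop := (rep '' Set.Icc (min a b) (max a b)).Finite

/-- parity flip between two points: `true` iff the number of classes in between is even,
i.e. the colors should differ. -/
noncomputable def flipb (rep : α → α) (a b : α) : Bool :=
  decide ((rep '' Set.Icc (min a b) (max a b)).ncard % 2 = 0)

lemma SB_symm {rep : α → α} {a b : α} (h : SB rep a b) : SB rep b a := by
  unfold SB at *; rwa [min_comm, max_comm]

lemma flipb_comm (rep : α → α) (a b : α) : flipb rep a b = flipb rep b a := by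
  unfold flipb; rw [min_comm, max_comm]

lemma Icc_minmax_subset (a b c : α) :
    Set.Icc (min a c) (max a c) ⊆ Set.Icc (min a b) (max a b) ∪ Set.Icc (min b c) (max b c) := by
  intro z hz
  simp only [Set.mem_Icc, Set.mem_union, min_le_iff, le_max_iff] at *
  rcases hz with ⟨h1, h2⟩
  rcases le_total z b with hzb | hbz
  · rcases h1 with h | h
    · exact Or.inl ⟨Or.inl h, Or.inr hzb⟩
    · exact Or.inr ⟨Or.inr h, Or.inl hzb⟩
  · rcases h2 with h | h
    · exact Or.inl ⟨Or.inr hbz, Or.inl h⟩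
    · exact Or.inr ⟨Or.inl hbz, Or.inr h⟩

lemma SB_trans {rep : α → α} {a b c : α} (h1 : SB rep a b) (h2 : SB rep b c) : SB rep a c := by
  refine Set.Finite.subset (h1.union h2) ?_
  rw [← Set.image_union]
  exact Set.image_mono (Icc_minmax_subset a b c)

/-- The greedy coloring. -/
noncomputable def Ccolor (e : α → ℕ) (he : Function.Injective e) (rep : α → α) (x : α) : Bool :=
  if h1 : {w | rep w = w ∧ e w < e x ∧ SB rep w x}.Nonempty then
    xor (flipb rep (pickMin e _ h1) x) (Ccolor e he rep (pickMin e _ h1))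
  else if h2 : {w | rep w = w ∧ e w < e x ∧ w < x}.Nonempty then
    ! Ccolor e he rep (pickMax _
      (Set.Finite.subset ((Set.finite_Iio (e x)).preimage (he.injOn)) (fun w hw => hw.2.1)) h2)
  else true
termination_by e x
decreasing_by
  · exact (pickMin_mem e _ h1).2.1
  · exact (pickMax_mem _ _ h2).2.1

end Cond

section Cond
variable {α : Type} [LinearOrder α]
  (r : α → α → Prop) (hequiv : Equivalence r)
  (hconv : ∀ x y z : α, x < y → y < z → r x z → r x y ∧ r y z)
  (rep : α → α) (hrep1 : ∀ x, r x (rep x)) (hrep2 : ∀ x y, r x y → rep x = rep y)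

include hequiv hconv hrep1 hrep2

lemma rep_idem (x : α) : rep (rep x) = rep x := (hrep2 x (rep x) (hrep1 x)).symm

lemma rep_eq_iff {x y : α} : rep x = rep y ↔ r x y := by
  constructor
  · intro h
    exact hequiv.trans (hrep1 x) (h ▸ (hequiv.symm (hrep1 y)))
  · exact hrep2 x y

omit hrep1 hrep2 in
lemma cross_right {a b b' : α} (hab : ¬ r a b) (h : a < b) (hb : r b b') : a < b' := by
  by_contra hle
  push_neg at hle
  rcases lt_or_eq_of_le hle with h2 | h2
  · exact hab ((hconv b' a b h2 h (hequiv.symm hb)).2)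
  · exact hab (h2 ▸ (hequiv.symm hb))

omit hrep1 hrep2 in
lemma cross_left {a b a' : α} (hab : ¬ r a b) (h : a < b) (ha : r a a') : a' < b := by
  by_contra hle
  push_neg at hle
  rcases lt_or_eq_of_le hle with h2 | h2
  · exact hab ((hconv a b a' h h2 ha).1)
  · exact hab (h2 ▸ ha)

omit hrep1 hrep2 in
lemma cross {a b a' b' : α} (hab : ¬ r a b) (h : a < b) (ha : r a a') (hb : r b b') :
    a' < b' := by
  have h1 : a' < b := cross_left r hequiv hconv hab h ha
  have h2 : ¬ r a' b := fun hr => hab (hequiv.trans ha hr)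
  exact cross_right r hequiv hconv h2 h1 hb

lemma rep_lt {x y : α} (hxy : ¬ r x y) (h : x < y) : rep x < rep y :=
  cross r hequiv hconv hxy h (hrep1 x) (hrep1 y)

/-- moving the lower endpoint within its class. -/
lemma repIcc_left {a a' b : α} (ha : r a a') :
    rep '' Set.Icc a' b ⊆ insert (rep a) (rep '' Set.Icc a b) := by
  rintro _ ⟨s, ⟨hs1, hs2⟩, rfl⟩
  by_cases hsa : r s a
  · left; exact hrep2 s a hsa
  · right
    refine ⟨s, ⟨?_, hs2⟩, rfl⟩
    by_contra hlt
    push_neg at hlt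
    rcases lt_or_eq_of_le hs1 with h3 | h3
    · exact hsa ((hconv a' s a h3 hlt (hequiv.symm ha)).2)
    · exact hsa (hequiv.symm (h3 ▸ ha))

lemma repIcc_right {a b b' : α} (hb : r b b') :
    rep '' Set.Icc a b' ⊆ insert (rep b) (rep '' Set.Icc a b) := by
  rintro _ ⟨s, ⟨hs1, hs2⟩, rfl⟩
  by_cases hsb : r s b
  · left; exact hrep2 s b hsb
  · right
    refine ⟨s, ⟨hs1, ?_⟩, rfl⟩
    by_contra hlt
    push_neg at hlt
    rcases lt_or_eq_of_le hs2 with h2 | h2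
    · exact hsb (hequiv.symm (hconv b s b' hlt h2 hb).1)
    · exact hsb (h2 ▸ (hequiv.symm hb))

/-- the two halves of an interval share exactly the middle class. -/
lemma repIcc_inter {a b c : α} (h1 : a ≤ b) (h2 : b ≤ c) :
    (rep '' Set.Icc a b) ∩ (rep '' Set.Icc b c) = {rep b} := by
  apply Set.eq_singleton_iff_unique_mem.mpr
  constructor
  · exact ⟨⟨b, ⟨h1, le_refl b⟩, rfl⟩, ⟨b, ⟨le_refl b, h2⟩, rfl⟩⟩
  · rintro w ⟨⟨u, ⟨hu1, hu2⟩, rfl⟩, ⟨v, ⟨hv1, hv2⟩, hv⟩⟩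
    have huv : r u v := by
      refine (rep_eq_iff r hequiv hconv rep hrep1 hrep2).mp hv.symm
    rcases lt_or_eq_of_le hu2 with h3 | h3
    · rcases lt_or_eq_of_le hv1 with h4 | h4
      · exact hrep2 u b (hconv u b v h3 h4 huv).1
      · exact hrep2 u b (h4 ▸ huv)
    · exact congrArg rep h3

lemma repIcc_count {a b c : α} (h1 : a ≤ b) (h2 : b ≤ c) (hfin : (rep '' Set.Icc a c).Finite) :
    (rep '' Set.Icc a c).ncard + 1 = (rep '' Set.Icc a b).ncard + (rep '' Set.Icc b c).ncard := by
  have hun : (rep '' Set.Icc a b) ∪ (rep '' Set.Icc b c) = rep '' Set.Icc a c := by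
    rw [← Set.image_union, Set.Icc_union_Icc_eq_Icc h1 h2]
  have hfab : (rep '' Set.Icc a b).Finite :=
    hfin.subset (Set.image_mono (Set.Icc_subset_Icc_right h2))
  have hfbc : (rep '' Set.Icc b c).Finite :=
    hfin.subset (Set.image_mono (Set.Icc_subset_Icc_left h1))
  have := Set.ncard_union_add_ncard_inter _ _ hfab hfbc
  rw [hun, repIcc_inter r hequiv hconv rep hrep1 hrep2 h1 h2] at this
  simpa using this

end Cond

section PL
variable {α : Type} [LinearOrder α]
  (r : α → α → Prop) (hequiv : Equivalence r)
  (hconv : ∀ x y z : α, x < y → y < z → r x z → r x y ∧ r y z)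
  (rep : α → α) (hrep1 : ∀ x, r x (rep x)) (hrep2 : ∀ x y, r x y → rep x = rep y)

lemma parity_bool {a b c : ℕ} (h : a + 1 = b + c) :
    (decide (a % 2 = 0)) = xor (decide (b % 2 = 0)) (decide (c % 2 = 0)) := by
  by_cases hb : b % 2 = 0 <;> by_cases hc : c % 2 = 0 <;>
    simp [hb, hc] <;> omega

lemma xr1 {x y z : Bool} (h : x = xor y z) : y = xor x z := by
  cases y <;> cases z <;> simp_all
lemma xr2 {x y z : Bool} (h : x = xor y z) : z = xor y x := by
  cases y <;> cases z <;> simp_all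
lemma xr3 {x y z : Bool} (h : x = xor y z) : z = xor x y := by
  cases y <;> cases z <;> simp_all

include hequiv hconv hrep1 hrep2 in
lemma PLcore {a b c : α} (h1 : a ≤ b) (h2 : b ≤ c) (hfin : SB rep a c) :
    flipb rep a c = xor (flipb rep a b) (flipb rep b c) := by
  have hac := le_trans h1 h2
  have hfin' : (rep '' Set.Icc a c).Finite := by
    unfold SB at hfin; rwa [min_eq_left hac, max_eq_right hac] at hfin
  have hcount := repIcc_count r hequiv hconv rep hrep1 hrep2 h1 h2 hfin'
  unfold flipb
  rw [min_eq_left h1, max_eq_right h1, min_eq_left h2, max_eq_right h2,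
    min_eq_left hac, max_eq_right hac]
  exact parity_bool hcount

include hequiv hconv hrep1 hrep2 in
lemma PL {a b c : α} (hab : SB rep a b) (hbc : SB rep b c) :
    flipb rep a c = xor (flipb rep a b) (flipb rep b c) := by
  have core := @PLcore α _ r hequiv hconv rep hrep1 hrep2
  rcases le_total a b with h1 | h1 <;> rcases le_total b c with h2 | h2
  · exact core (a := a) (b := b) (c := c) h1 h2 (SB_trans hab hbc)
  · rcases le_total a c with h3 | h3
    · rw [flipb_comm rep b c]
      exact xr1 (core (a := a) (b := c) (c := b) h3 h2 hab)
    · rw [flipb_comm rep a c, flipb_comm rep b c, Bool.xor_comm]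
      exact xr1 (core (a := c) (b := a) (c := b) h3 h1 (SB_symm hbc))
  · rcases le_total a c with h3 | h3
    · rw [flipb_comm rep a b]
      exact xr2 (core (a := b) (b := a) (c := c) h1 h3 hbc)
    · rw [flipb_comm rep a c, flipb_comm rep a b]
      exact xr3 (core (a := b) (b := c) (c := a) h2 h3 (SB_symm hab))
  · rw [flipb_comm rep a c, flipb_comm rep a b, flipb_comm rep b c, Bool.xor_comm]
    exact core (a := c) (b := b) (c := a) h2 h1 (SB_symm (SB_trans hab hbc))

end PL

section Inv
variable {α : Type} [LinearOrder α]
  (r : α → α → Prop) (hequiv : Equivalence r)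
  (hconv : ∀ x y z : α, x < y → y < z → r x z → r x y ∧ r y z)
  (rep : α → α) (hrep1 : ∀ x, r x (rep x)) (hrep2 : ∀ x y, r x y → rep x = rep y)
  (e : α → ℕ) (he : Function.Injective e)

include hequiv hconv hrep1 hrep2 in
lemma cInv : ∀ n (v : α), e v = n → ∀ u, rep u = u → rep v = v → e u < e v → SB rep u v →
    Ccolor e he rep v = xor (flipb rep u v) (Ccolor e he rep u) := by
  intro n
  induction n using Nat.strong_induction_on with
  | _ n IH =>
    intro v hv u hu hvv huv hsb
    have h1 : ({w | rep w = w ∧ e w < e v ∧ SB rep w v}).Nonempty := ⟨u, hu, huv, hsb⟩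
    rw [Ccolor, dif_pos h1]
    obtain ⟨hm1, hm2, hm3⟩ := pickMin_mem e _ h1
    by_cases hmu : pickMin e _ h1 = u
    · rw [hmu]
    · have hle : e (pickMin e _ h1) ≤ e u := pickMin_le e _ h1 ⟨hu, huv, hsb⟩
      have hlt : e (pickMin e _ h1) < e u := lt_of_le_of_ne hle (fun h => hmu (he h))
      have hSBmu : SB rep (pickMin e _ h1) u := SB_trans hm3 (SB_symm hsb)
      have ih1 := IH (e u) (hv ▸ huv) u rfl (pickMin e _ h1) hm1 hu hlt hSBmu
      have hPL := PL r hequiv hconv rep hrep1 hrep2 hSBmu hsb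
      rw [hPL, ih1]
      cases (flipb rep (pickMin e _ h1) u) <;> cases (flipb rep u v) <;>
        cases (Ccolor e he rep (pickMin e _ h1)) <;> rfl

end Inv

section Main
variable {α : Type} [LinearOrder α]

noncomputable def pickMinO (S : Set α) (hf : S.Finite) (h : S.Nonempty) : α :=
  hf.toFinset.min' (by simpa using h)

lemma pickMinO_mem (S : Set α) (hf : S.Finite) (h : S.Nonempty) : pickMinO S hf h ∈ S := by
  have := hf.toFinset.min'_mem (by simpa using h)
  simpa [pickMinO] using this

lemma pickMinO_le (S : Set α) (hf : S.Finite) (h : S.Nonempty) {w : α} (hw : w ∈ S) :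
    pickMinO S hf h ≤ w :=
  hf.toFinset.min'_le w (by simpa using hw)

variable
  (r : α → α → Prop) (hequiv : Equivalence r)
  (hconv : ∀ x y z : α, x < y → y < z → r x z → r x y ∧ r y z)
  (rep : α → α) (hrep1 : ∀ x, r x (rep x)) (hrep2 : ∀ x y, r x y → rep x = rep y)
  (e : α → ℕ) (he : Function.Injective e)

include hequiv hconv hrep1 hrep2 in
lemma diffColor {u v : α} (hu : rep u = u) (hv : rep v = v) (huv : u ≠ v)
    (hsb : SB rep u v) (hflip : flipb rep u v = true) :
    Ccolor e he rep u ≠ Ccolor e he rep v := by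
  rcases lt_trichotomy (e u) (e v) with h | h | h
  · have := cInv r hequiv hconv rep hrep1 hrep2 e he (e v) v rfl u hu hv h hsb
    rw [this, hflip]
    cases (Ccolor e he rep u) <;> simp
  · exact absurd (he h) huv
  · have := cInv r hequiv hconv rep hrep1 hrep2 e he (e u) u rfl v hv hu h (SB_symm hsb)
    rw [this, flipb_comm rep v u, hflip]
    cases (Ccolor e he rep v) <;> simp

include hequiv hconv hrep1 hrep2 in
lemma pair_flip {a b : α} (hab : a < b) (ha : rep a = a) (hb : rep b = b)
    (hsub : rep '' Set.Icc a b ⊆ {a, b}) :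
    flipb rep a b = true ∧ SB rep a b := by
  have heq : rep '' Set.Icc a b = {a, b} := by
    apply Set.Subset.antisymm hsub
    intro w hw
    simp only [Set.mem_insert_iff, Set.mem_singleton_iff] at hw
    rcases hw with rfl | rfl
    · exact ⟨w, ⟨le_refl w, le_of_lt hab⟩, ha⟩
    · exact ⟨w, ⟨le_of_lt hab, le_refl w⟩, hb⟩
  constructor
  · unfold flipb
    rw [min_eq_left (le_of_lt hab), max_eq_right (le_of_lt hab), heq,
      Set.ncard_pair (ne_of_lt hab)]
    decide
  · unfold SB
    rw [min_eq_left (le_of_lt hab), max_eq_right (le_of_lt hab), heq]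
    exact (Set.finite_singleton a).insert b |>.subset (by simp [Set.pair_comm])

include hequiv hconv hrep1 hrep2 in
lemma ADJup {a b : α} (hab : a < b) (hnab : ¬ r a b) (ha : rep a = a)
    (hfin : (rep '' Set.Icc a b).Finite) :
    ∃ m' t, rep m' = m' ∧ a < m' ∧ ¬ r a m' ∧ t ∈ Set.Icc a b ∧ r t m' ∧
      rep '' Set.Icc a m' ⊆ {a, m'} := by
  have hrepb : a < rep b := by
    have := rep_lt r hequiv hconv rep hrep1 hrep2 hnab hab
    rwa [ha] at this
  set D : Set α := {c ∈ rep '' Set.Icc a b | a < c} with hD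
  have hDfin : D.Finite := hfin.subset (Set.sep_subset _ _)
  have hDne : D.Nonempty := ⟨rep b, ⟨b, ⟨le_of_lt hab, le_refl b⟩, rfl⟩, hrepb⟩
  set m' := pickMinO D hDfin hDne with hm'
  obtain ⟨⟨t, htmem, htm⟩, ham'⟩ := pickMinO_mem D hDfin hDne
  rw [← hm'] at htm ham'
  have hm'rep : rep m' = m' := by rw [← htm]; exact rep_idem r hequiv hconv rep hrep1 hrep2 t
  have hrtm : r t m' := by rw [← htm]; exact hrep1 t
  have hnam : ¬ r a m' := by
    intro h
    have := hrep2 a m' h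
    rw [ha, hm'rep] at this
    exact absurd this (ne_of_lt ham')
  refine ⟨m', t, hm'rep, ham', hnam, htmem, hrtm, ?_⟩
  rintro _ ⟨s, ⟨hs1, hs2⟩, rfl⟩
  by_cases hsa : r s a
  · rw [hrep2 s a hsa, ha]; exact Set.mem_insert _ _
  by_cases hsm : r s m'
  · rw [hrep2 s m' hsm, hm'rep]; right; rfl
  exfalso
  have has : a < s := lt_of_le_of_ne hs1 (fun h => hsa (h ▸ hequiv.refl a))
  have hnas : ¬ r a s := fun h => hsa (hequiv.symm h)
  have harep : a < rep s := by
    have := rep_lt r hequiv hconv rep hrep1 hrep2 hnas has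
    rwa [ha] at this
  have hsm' : s < m' := lt_of_le_of_ne hs2 (fun h => hsm (h ▸ hequiv.refl s))
  have hrsm : rep s < m' := by
    have := rep_lt r hequiv hconv rep hrep1 hrep2 hsm hsm'
    rwa [hm'rep] at this
  have hst : s < t := cross r hequiv hconv hsm hsm' (hequiv.refl s) (hequiv.symm hrtm)
  have hsb' : s ≤ b := le_of_lt (lt_of_lt_of_le hst htmem.2)
  have : rep s ∈ D := ⟨⟨s, ⟨le_of_lt has, hsb'⟩, rfl⟩, harep⟩
  exact absurd (pickMinO_le D hDfin hDne this) (not_le_of_gt hrsm)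

include hequiv hconv hrep1 hrep2 in
lemma ADJdown {a b : α} (hab : a < b) (hnab : ¬ r a b) (hb : rep b = b)
    (hfin : (rep '' Set.Icc a b).Finite) :
    ∃ m' t, rep m' = m' ∧ m' < b ∧ ¬ r m' b ∧ t ∈ Set.Icc a b ∧ r t m' ∧
      rep '' Set.Icc m' b ⊆ {m', b} := by
  have hrepa : rep a < b := by
    have := rep_lt r hequiv hconv rep hrep1 hrep2 hnab hab
    rwa [hb] at this
  set D : Set α := {c ∈ rep '' Set.Icc a b | c < b} with hD
  have hDfin : D.Finite := hfin.subset (Set.sep_subset _ _)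
  have hDne : D.Nonempty := ⟨rep a, ⟨a, ⟨le_refl a, le_of_lt hab⟩, rfl⟩, hrepa⟩
  set m' := pickMax D hDfin hDne with hm'
  obtain ⟨⟨t, htmem, htm⟩, ham'⟩ := pickMax_mem D hDfin hDne
  rw [← hm'] at htm ham'
  have hm'rep : rep m' = m' := by rw [← htm]; exact rep_idem r hequiv hconv rep hrep1 hrep2 t
  have hrtm : r t m' := by rw [← htm]; exact hrep1 t
  have hnam : ¬ r m' b := by
    intro h
    have := hrep2 m' b h
    rw [hb, hm'rep] at this
    exact absurd this (ne_of_lt ham')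
  refine ⟨m', t, hm'rep, ham', hnam, htmem, hrtm, ?_⟩
  rintro _ ⟨s, ⟨hs1, hs2⟩, rfl⟩
  by_cases hsb' : r s b
  · rw [hrep2 s b hsb', hb]; right; rfl
  by_cases hsm : r s m'
  · rw [hrep2 s m' hsm, hm'rep]; exact Set.mem_insert _ _
  exfalso
  have hsbb : s < b := lt_of_le_of_ne hs2 (fun h => hsb' (h ▸ hequiv.refl s))
  have hrsb : rep s < b := by
    have := rep_lt r hequiv hconv rep hrep1 hrep2 hsb' hsbb
    rwa [hb] at this
  have hms : m' < s := lt_of_le_of_ne hs1 (fun h => hsm (h.symm ▸ hequiv.refl s))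
  have hnms : ¬ r m' s := fun h => hsm (hequiv.symm h)
  have hmrs : m' < rep s := by
    have := rep_lt r hequiv hconv rep hrep1 hrep2 hnms hms
    rwa [hm'rep] at this
  have hts : t < s := cross r hequiv hconv hnms hms (hequiv.symm hrtm) (hequiv.refl s)
  have has' : a ≤ s := le_of_lt (lt_of_le_of_lt htmem.1 hts)
  have : rep s ∈ D := ⟨⟨s, ⟨has', le_of_lt hsbb⟩, rfl⟩, hrsb⟩
  exact absurd (le_pickMax D hDfin hDne this) (not_le_of_gt hmrs)

end Main

section Main2
variable {α : Type} [LinearOrder α]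

lemma Ccolor_step2 (e : α → ℕ) (he : Function.Injective e) (rep : α → α) {v : α}
    (h1 : ¬ ({w | rep w = w ∧ e w < e v ∧ SB rep w v}).Nonempty)
    (h2 : ({w | rep w = w ∧ e w < e v ∧ w < v}).Nonempty) :
    ∃ m, (rep m = m ∧ e m < e v ∧ m < v) ∧ (∀ w, (rep w = w ∧ e w < e v ∧ w < v) → w ≤ m) ∧
      Ccolor e he rep v = ! Ccolor e he rep m := by
  rw [Ccolor, dif_neg h1, dif_pos h2]
  exact ⟨pickMax _ _ h2, pickMax_mem _ _ h2, fun w hw => le_pickMax _ _ h2 hw, rfl⟩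

end Main2

/-- every condensation of a countable linear order is encoded by
a set: for every equivalence relation `r` on `α` with convex classes there is
`X ⊆ α` such that for all `x ≤ y`, `x ∼ y` iff `[x, y] ⊆ X` or
`[x, y] ∩ X = ∅`. -/
theorem condensation_encoded_by_set {α : Type} [LinearOrder α] [Countable α]
    (r : α → α → Prop) (hequiv : Equivalence r)
    (hconv : ∀ x y z : α, x < y → y < z → r x z → r x y ∧ r y z) :
    ∃ X : Set α, ∀ x y : α, x ≤ y →
      (r x y ↔ (Set.Icc x y ⊆ X ∨ ∀ z ∈ Set.Icc x y, z ∉ X)) := by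
  obtain ⟨e, he⟩ := Countable.exists_injective_nat α
  set rep : α → α := fun x => pickMin e {z | r x z} ⟨x, hequiv.refl x⟩ with hrepdef
  have hrep1 : ∀ x, r x (rep x) := fun x => pickMin_mem e _ _
  have hrepmin : ∀ x z, r x z → e (rep x) ≤ e z := fun x z h => pickMin_le e _ _ h
  have hrep2 : ∀ x y, r x y → rep x = rep y := by
    intro x y h
    apply he
    have h1 : e (rep x) ≤ e (rep y) := hrepmin x _ (hequiv.trans h (hrep1 y))
    have h2 : e (rep y) ≤ e (rep x) := hrepmin y _ (hequiv.trans (hequiv.symm h) (hrep1 x))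
    omega
  have hidem : ∀ x, rep (rep x) = rep x := rep_idem r hequiv hconv rep hrep1 hrep2
  refine ⟨{z | Ccolor e he rep (rep z) = true}, ?_⟩
  intro x y hxy
  constructor
  · intro hr
    have hall : ∀ z ∈ Set.Icc x y, rep z = rep x := by
      intro z hz
      rcases eq_or_lt_of_le hz.1 with h1 | h1
      · rw [← h1]
      rcases eq_or_lt_of_le hz.2 with h2 | h2
      · rw [h2]; exact (hrep2 x y hr).symm
      exact hrep2 z x (hequiv.symm (hconv x z y h1 h2 hr).1)
    by_cases hx : Ccolor e he rep (rep x) = true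
    · left
      intro z hz
      show Ccolor e he rep (rep z) = true
      rw [hall z hz]; exact hx
    · right
      intro z hz hz2
      have : Ccolor e he rep (rep z) = true := hz2
      rw [hall z hz] at this
      exact hx this
  · intro hd
    by_contra hnr
    have hlt : x < y := lt_of_le_of_ne hxy (fun h => hnr (h ▸ hequiv.refl x))
    have main : ∃ z1 ∈ Set.Icc x y, ∃ z2 ∈ Set.Icc x y,
        Ccolor e he rep (rep z1) ≠ Ccolor e he rep (rep z2) := by
      by_cases hAB : ∃ z1 ∈ Set.Icc x y, ∃ z2 ∈ Set.Icc x y,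
          z1 < z2 ∧ ¬ r z1 z2 ∧ SB rep (rep z1) (rep z2)
      · -- Case A: two distinct classes of the same block meet the interval
        obtain ⟨z1, hz1m, z2, hz2m, hlt12, hnr12, hsb12⟩ := hAB
        have hr12 : rep z1 < rep z2 := rep_lt r hequiv hconv rep hrep1 hrep2 hnr12 hlt12
        have hfin0 : (rep '' Set.Icc (rep z1) (rep z2)).Finite := by
          unfold SB at hsb12
          rwa [min_eq_left (le_of_lt hr12), max_eq_right (le_of_lt hr12)] at hsb12
        have hnrr : ¬ r (rep z1) (rep z2) := fun h =>
          hnr12 (hequiv.trans (hrep1 z1) (hequiv.trans h (hequiv.symm (hrep1 z2))))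
        obtain ⟨m', t, hm'rep, ham', hnam, htmem, hrtm, hsub⟩ :=
          ADJup r hequiv hconv rep hrep1 hrep2 hr12 hnrr (hidem z1) hfin0
        obtain ⟨hflip, hsbpair⟩ :=
          pair_flip r hequiv hconv rep hrep1 hrep2 ham' (hidem z1) hm'rep hsub
        have hdiff := diffColor r hequiv hconv rep hrep1 hrep2 e he
          (hidem z1) hm'rep (ne_of_lt ham') hsbpair hflip
        rcases le_total t z2 with htz | hzt
        · -- the second point is t itself
          have hz1t : z1 < t := cross r hequiv hconv hnam ham'
            (hequiv.symm (hrep1 z1)) (hequiv.symm hrtm)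
          refine ⟨z1, hz1m, t, ⟨le_trans hz1m.1 (le_of_lt hz1t), le_trans htz hz2m.2⟩, ?_⟩
          rw [hrep2 t m' hrtm, hm'rep]
          exact hdiff
        · -- the second point is z2
          have hrz2m : r z2 m' := by
            rcases eq_or_lt_of_le hzt with hcase | hcase
            · rw [hcase]; exact hrtm
            · by_cases hz2t : r z2 t
              · exact hequiv.trans hz2t hrtm
              · exfalso
                have : rep z2 < t := cross r hequiv hconv hz2t hcase (hrep1 z2) (hequiv.refl t)
                exact absurd htmem.2 (not_le_of_gt this)
          refine ⟨z1, hz1m, z2, hz2m, ?_⟩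
          rw [hrep2 z2 m' hrz2m, hm'rep]
          exact hdiff
      · -- Case B: all classes meeting the interval lie in distinct blocks
        push_neg at hAB
        have hbetween : ∀ a b, x ≤ a → b ≤ y → a < b → ¬ r a b →
            ∃ s, a < s ∧ s < b ∧ ¬ r s a ∧ ¬ r s b := by
          intro a b hxa hby hab hnab
          by_contra hno
          push_neg at hno
          refine hAB a ⟨hxa, le_trans (le_of_lt hab) hby⟩ b
            ⟨le_trans hxa (le_of_lt hab), hby⟩ hab hnab ?_
          have hrab : rep a < rep b := rep_lt r hequiv hconv rep hrep1 hrep2 hnab hab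
          unfold SB
          rw [min_eq_left (le_of_lt hrab), max_eq_right (le_of_lt hrab)]
          refine Set.Finite.subset ((Set.finite_singleton (rep b)).insert (rep a)) ?_
          rintro _ ⟨s, ⟨hs1, hs2⟩, rfl⟩
          by_cases hsa : r s a
          · rw [hrep2 s a hsa]; exact Set.mem_insert _ _
          by_cases hsb2 : r s b
          · rw [hrep2 s b hsb2]; right; rfl
          exfalso
          have h1 : rep a < s := lt_of_le_of_ne hs1
            (fun h => hsa (hequiv.symm (h ▸ hrep1 a)))
          have h2 : a < s := cross r hequiv hconv
            (fun h => hsa (hequiv.symm (hequiv.trans (hrep1 a) h))) h1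
            (hequiv.symm (hrep1 a)) (hequiv.refl s)
          have h3 : s < rep b := lt_of_le_of_ne hs2
            (fun h => hsb2 (h ▸ (hequiv.symm (hrep1 b))))
          have h4 : s < b := cross r hequiv hconv
            (fun h => hsb2 (hequiv.trans h (hequiv.symm (hrep1 b)))) h3
            (hequiv.refl s) (hequiv.symm (hrep1 b))
          exact hsb2 (hno s h2 h4 hsa)
        -- the set of representatives of classes strictly inside the interval
        set T : Set α := {w | rep w = w ∧ x < w ∧ w < y ∧ ¬ r w x ∧ ¬ r w y} with hTdef
        have hTne : T.Nonempty := by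
          obtain ⟨s, h1, h2, h3, h4⟩ := hbetween x y (le_refl x) (le_refl y) hlt hnr
          refine ⟨rep s, hidem s, ?_, ?_, ?_, ?_⟩
          · exact cross r hequiv hconv (fun h => h3 (hequiv.symm h)) h1
              (hequiv.refl x) (hrep1 s)
          · exact cross r hequiv hconv h4 h2 (hrep1 s) (hequiv.refl y)
          · exact fun h => h3 (hequiv.trans (hrep1 s) h)
          · exact fun h => h4 (hequiv.trans (hrep1 s) h)
        have hu0mem := pickMin_mem e T hTne
        set u0 : α := pickMin e T hTne with hu0def
        obtain ⟨hu0rep, hxu0, hu0y, hu0nx, hu0ny⟩ := hu0mem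
        have hT'ne : (T ∩ {w | u0 < w}).Nonempty := by
          obtain ⟨s, h1, h2, h3, h4⟩ := hbetween u0 y (le_of_lt hxu0) (le_refl y) hu0y hu0ny
          have hu0s : u0 < rep s := by
            have := rep_lt r hequiv hconv rep hrep1 hrep2 (fun h => h3 (hequiv.symm h)) h1
            rwa [hu0rep] at this
          refine ⟨rep s, ⟨hidem s, lt_trans hxu0 hu0s, ?_, ?_, ?_⟩, hu0s⟩
          · exact cross r hequiv hconv h4 h2 (hrep1 s) (hequiv.refl y)
          · intro h
            have hrx : rep x < u0 := by
              have := rep_lt r hequiv hconv rep hrep1 hrep2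
                (fun hh => hu0nx (hequiv.symm hh)) hxu0
              rwa [hu0rep] at this
            have : rep s = rep x := by
              rw [← hidem s]; exact hrep2 (rep s) x h
            rw [this] at hu0s
            exact lt_irrefl _ (lt_trans hrx hu0s)
          · exact fun h => h4 (hequiv.trans (hrep1 s) h)
        have hyymem := pickMin_mem e _ hT'ne
        set yy : α := pickMin e _ hT'ne with hyydef
        obtain ⟨⟨hyyrep, hxyy, hyyy, hyynx, hyyny⟩, hu0yy⟩ := hyymem
        have heuyy : e u0 < e yy := by
          have hle : e u0 ≤ e yy := pickMin_le e T hTne ⟨hyyrep, hxyy, hyyy, hyynx, hyyny⟩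
          rcases eq_or_lt_of_le hle with h | h
          · exact absurd (he h) (ne_of_lt hu0yy)
          · exact h
        -- no earlier representative is in the same block as yy
        have hS1 : ¬ ({w | rep w = w ∧ e w < e yy ∧ SB rep w yy}).Nonempty := by
          rintro ⟨w, hwrep, hwe, hwsb⟩
          have hwne : w ≠ yy := fun h => by rw [h] at hwe; omega
          have hnwyy : ¬ r w yy := fun h => hwne (by rw [← hwrep, ← hyyrep]; exact hrep2 w yy h)
          rcases lt_or_gt_of_ne hwne with hlt' | hgt'
          · -- w < yy : use the predecessor class of yy
            have hfin0 : (rep '' Set.Icc w yy).Finite := by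
              unfold SB at hwsb
              rwa [min_eq_left (le_of_lt hlt'), max_eq_right (le_of_lt hlt')] at hwsb
            obtain ⟨m', t, hm'rep, hm'yy, hnm'yy, htmem, hrtm, hsub⟩ :=
              ADJdown r hequiv hconv rep hrep1 hrep2 hlt' hnwyy hyyrep hfin0
            have hsbm'yy : SB rep m' yy := by
              unfold SB
              rw [min_eq_left (le_of_lt hm'yy), max_eq_right (le_of_lt hm'yy)]
              exact Set.Finite.subset ((Set.finite_singleton yy).insert m') hsub
            rcases le_total x m' with hxm | hmx
            · exact hAB m' ⟨hxm, le_of_lt (lt_trans hm'yy hyyy)⟩ yy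
                ⟨le_of_lt hxyy, le_of_lt hyyy⟩ hm'yy hnm'yy
                (by rw [hm'rep, hyyrep]; exact hsbm'yy)
            ·
              have hrm'x : r m' x := by
                by_contra hnmx
                have hm'x : m' < x := lt_of_le_of_ne hmx
                  (fun h => hnmx (h ▸ hequiv.refl m'))
                have hxmem : rep x ∈ ({m', yy} : Set α) :=
                  hsub ⟨x, ⟨le_of_lt hm'x, le_of_lt hxyy⟩, rfl⟩
                rcases hxmem with h | h
                · exact hnmx (hequiv.symm ((rep_eq_iff r hequiv hconv rep hrep1 hrep2).mp
                    (by rw [h, hm'rep])))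
                · exact hyynx (hequiv.symm ((rep_eq_iff r hequiv hconv rep hrep1 hrep2).mp
                    (by rw [h, hyyrep])))
              refine hAB x ⟨le_refl x, hxy⟩ yy ⟨le_of_lt hxyy, le_of_lt hyyy⟩ hxyy
                (fun h => hyynx (hequiv.symm h)) ?_
              have : rep x = m' := by rw [hrep2 x m' (hequiv.symm hrm'x), hm'rep]
              rw [this, hyyrep]
              exact hsbm'yy
          · -- yy < w : use the successor class of yy
            have hfin0 : (rep '' Set.Icc yy w).Finite := by
              unfold SB at hwsb
              rwa [min_eq_right (le_of_lt hgt'), max_eq_left (le_of_lt hgt')] at hwsb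
            obtain ⟨m', t, hm'rep, hyym', hnyym', htmem, hrtm, hsub⟩ :=
              ADJup r hequiv hconv rep hrep1 hrep2 hgt' (fun h => hnwyy (hequiv.symm h))
                hyyrep hfin0
            have hsbyym' : SB rep yy m' := by
              unfold SB
              rw [min_eq_left (le_of_lt hyym'), max_eq_right (le_of_lt hyym')]
              exact Set.Finite.subset ((Set.finite_singleton m').insert yy) hsub
            rcases le_total m' y with hmy | hym
            · exact hAB yy ⟨le_of_lt hxyy, le_of_lt hyyy⟩ m'
                ⟨le_of_lt (lt_trans hxyy hyym'), hmy⟩ hyym' hnyym'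
                (by rw [hm'rep, hyyrep]; exact hsbyym')
            ·
              have hrm'y : r m' y := by
                by_contra hnmy
                have hym' : y < m' := lt_of_le_of_ne hym
                  (fun h => hnmy (h.symm ▸ hequiv.refl m'))
                have hymem : rep y ∈ ({yy, m'} : Set α) :=
                  hsub ⟨y, ⟨le_of_lt hyyy, le_of_lt hym'⟩, rfl⟩
                rcases hymem with h | h
                · exact hyyny ((rep_eq_iff r hequiv hconv rep hrep1 hrep2).mp
                    (by rw [h, hyyrep]))
                · exact hnmy (hequiv.symm ((rep_eq_iff r hequiv hconv rep hrep1 hrep2).mp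
                    (by rw [h, hm'rep])))
              refine hAB yy ⟨le_of_lt hxyy, le_of_lt hyyy⟩ y ⟨hxy, le_refl y⟩ hyyy hyyny ?_
              have : rep y = m' := by rw [hrep2 y m' (hequiv.symm hrm'y), hm'rep]
              rw [this, hyyrep]
              exact hsbyym'
        have hS2ne : ({w | rep w = w ∧ e w < e yy ∧ w < yy}).Nonempty :=
          ⟨u0, hu0rep, heuyy, hu0yy⟩
        obtain ⟨m, ⟨hmrep, hme, hmyy⟩, hmax, hCyy⟩ := Ccolor_step2 e he rep hS1 hS2ne
        have hu0m : u0 ≤ m := hmax u0 ⟨hu0rep, heuyy, hu0yy⟩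
        refine ⟨m, ⟨le_of_lt (lt_of_lt_of_le hxu0 hu0m), le_of_lt (lt_trans hmyy hyyy)⟩,
          yy, ⟨le_of_lt hxyy, le_of_lt hyyy⟩, ?_⟩
        rw [hmrep, hyyrep, hCyy]
        cases (Ccolor e he rep m) <;> simp
    obtain ⟨z1, hz1, z2, hz2, hne⟩ := main
    rcases hd with hd | hd
    · have t1 : Ccolor e he rep (rep z1) = true := hd hz1
      have t2 : Ccolor e he rep (rep z2) = true := hd hz2
      exact hne (t1.trans t2.symm)
    · have t1 : ¬ Ccolor e he rep (rep z1) = true := hd z1 hz1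
      have t2 : ¬ Ccolor e he rep (rep z2) = true := hd z2 hz2
      rw [Bool.not_eq_true] at t1 t2
      exact hne (t1.trans t2.symm)
end
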